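/- arXiv:1605.08392 — 7 statements merged into one kernel-verified Lean document; each statement's English description precedes it below -/
import Mathlib

section
/- For all t in [0, π], 2 - cos t ≥ cosh(t/4). -/
lemma cosh_le_one_add_sq {x : ℝ} (hx : x ^ 2 ≤ 1) : Real.cosh x ≤ 1 + x ^ 2 := by
  have h1 := Real.cosh_le_exp_half_sq x
  have h2 : Real.exp (x ^ 2 / 2) ≤ 1 + x ^ 2 := by
    have h3 : (1 - x ^ 2 / 2) ≤ Real.exp (-(x ^ 2 / 2)) := by
      have := Real.add_one_le_exp (-(x ^ 2 / 2)); linarith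
    have h4 : Real.exp (x ^ 2 / 2) * Real.exp (-(x ^ 2 / 2)) = 1 := by
      rw [← Real.exp_add]; simp
    have h5 : (0:ℝ) < 1 - x ^ 2 / 2 := by nlinarith
    have h6 : Real.exp (x ^ 2 / 2) ≤ 1 / (1 - x ^ 2 / 2) := by
      rw [le_div_iff₀ h5]
      nlinarith [Real.exp_pos (x ^ 2 / 2), h3, h4,
        mul_le_mul_of_nonneg_left h3 (Real.exp_pos (x ^ 2 / 2)).le]
    have h7 : 1 / (1 - x ^ 2 / 2) ≤ 1 + x ^ 2 := by
      rw [div_le_iff₀ h5]; nlinarith [sq_nonneg x]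
    linarith
  linarith

/-- For all `t ∈ [0, π]`, `2 - cos t ≥ cosh (t/4)`. -/
theorem two_sub_cos_ge_cosh_quarter :
    ∀ t ∈ Set.Icc (0 : ℝ) Real.pi, Real.cosh (t / 4) ≤ 2 - Real.cos t := by
  rintro t ⟨ht0, htpi⟩
  have hpi : Real.pi ≤ 4 := by nlinarith [Real.pi_le_four]
  have hcos : Real.cos t ≤ 1 - 2 / Real.pi ^ 2 * t ^ 2 := by
    apply Real.cos_le_one_sub_mul_cos_sq
    rw [abs_of_nonneg ht0]; exact htpi
  have hsq : (t / 4) ^ 2 ≤ 1 := by nlinarith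
  have hcosh := cosh_le_one_add_sq hsq
  have hpipos := Real.pi_pos
  have hfrac : (2:ℝ) / 16 ≤ 2 / Real.pi ^ 2 := by
    apply div_le_div_of_nonneg_left (by norm_num) (by positivity)
    nlinarith
  have : (t / 4) ^ 2 ≤ 2 / Real.pi ^ 2 * t ^ 2 := by
    have ht2 : 0 ≤ t ^ 2 := sq_nonneg t
    have := mul_le_mul_of_nonneg_right hfrac ht2
    nlinarith
  linarith
end

section
/- Let x_1, …, x_n be unit vectors in a real Hilbert space H with |⟨x_i, x_{i'}⟩| ≤ A_1 ρ^{|i - i'|} for all i ≠ i', where 0 < ρ < 1/4 and A_1 ρ < 0.1. Let ε_i = x_i − (orthogonal projection of x_i onto span(x_1,…,x_{i−1})). Then for every i, 1 ≥ ‖ε_i‖^2 ≥ 1 − 4 A_1^2 ρ^2/(1 − ρ^2). -/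
open RealInnerProductSpace

lemma aux_geom_sum (r : ℝ) (hr0 : 0 ≤ r) (hr1 : r < 1) (T : Finset ℕ) (e : ℕ → ℕ)
    (hinj : Set.InjOn e T) (he : ∀ k ∈ T, 1 ≤ e k) :
    ∑ k ∈ T, r ^ e k ≤ r / (1 - r) := by
  have h1r : (0:ℝ) < 1 - r := by linarith
  set N := (T.image e).sup id with hN
  calc ∑ k ∈ T, r ^ e k = ∑ m ∈ T.image e, r ^ m :=
        (Finset.sum_image (fun a ha b hb h => hinj ha hb h)).symm
    _ ≤ ∑ m ∈ Finset.Ico 1 (N + 1), r ^ m := by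
        apply Finset.sum_le_sum_of_subset_of_nonneg
        · intro m hm
          simp only [Finset.mem_Ico]
          obtain ⟨k, hk, rfl⟩ := Finset.mem_image.mp hm
          exact ⟨he k hk, Nat.lt_succ_of_le (Finset.le_sup (f := id) hm)⟩
        · intro m _ _; positivity
    _ = ∑ m ∈ Finset.range N, r ^ (1 + m) := by rw [Finset.sum_Ico_eq_sum_range]; simp
    _ = r * ∑ m ∈ Finset.range N, r ^ m := by
        rw [Finset.mul_sum]; apply Finset.sum_congr rfl; intro m _; rw [pow_add, pow_one]
    _ ≤ r * (1 / (1 - r)) := by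
        apply mul_le_mul_of_nonneg_left _ hr0
        rw [geom_sum_eq (ne_of_lt hr1), ← neg_div_neg_eq,
          show -(r ^ N - 1) = 1 - r ^ N by ring, show -(r - 1) = 1 - r by ring]
        exact div_le_div₀ zero_le_one (by nlinarith [pow_nonneg hr0 N]) h1r le_rfl
    _ = r / (1 - r) := by ring

lemma aux_sum_erase_comm (S : Finset ℕ) (g : ℕ → ℕ → ℝ) :
    ∑ j ∈ S, ∑ k ∈ S.erase j, g j k = ∑ k ∈ S, ∑ j ∈ S.erase k, g j k := by
  have h1 : ∀ j ∈ S, ∑ k ∈ S.erase j, g j k = (∑ k ∈ S, g j k) - g j j := by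
    intro j hj; exact Finset.sum_erase_eq_sub hj
  have h2 : ∀ k ∈ S, ∑ j ∈ S.erase k, g j k = (∑ j ∈ S, g j k) - g k k := by
    intro k hk; exact Finset.sum_erase_eq_sub hk
  rw [Finset.sum_congr rfl h1, Finset.sum_congr rfl h2, Finset.sum_sub_distrib,
    Finset.sum_sub_distrib, Finset.sum_comm]

set_option maxHeartbeats 1000000 in
/-- **Gram–Schmidt residuals of weakly correlated unit vectors are nearly unit.**
Let `x_1, …, x_n` be unit vectors in a real Hilbert space with
`|⟨x_i, x_{i'}⟩| ≤ A_1 ρ^{|i - i'|}` for `i ≠ i'`, where `0 < ρ < 1/4` and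
`A_1 ρ < 0.1`.  If `ε_i` denotes the Gram–Schmidt residual of `x_i`
(i.e. `x_i - ε_i` lies in the span of `x_1, …, x_{i-1}` and `ε_i` is orthogonal
to that span), then `1 ≥ ‖ε_i‖² ≥ 1 − 4A_1²ρ²/(1 − ρ²)` for every `i`. -/
theorem gram_schmidt_residual_norm_bounds
    {H : Type*} [NormedAddCommGroup H] [InnerProductSpace ℝ H] [CompleteSpace H]
    (n : ℕ) (x ε : ℕ → H) (A₁ ρ : ℝ)
    (hρ0 : 0 < ρ) (hρ : ρ < 1 / 4) (hA₁ : 0 < A₁) (hA₁ρ : A₁ * ρ < 0.1)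
    (hunit : ∀ i < n, ‖x i‖ = 1)
    (hcorr : ∀ i < n, ∀ i' < n, i ≠ i' →
      |⟪x i, x i'⟫| ≤ A₁ * ρ ^ (Int.natAbs ((i : ℤ) - (i' : ℤ))))
    (hmem : ∀ i < n, x i - ε i ∈ Submodule.span ℝ (x '' {j | j < i}))
    (horth : ∀ i < n, ∀ y ∈ Submodule.span ℝ (x '' {j | j < i}), ⟪ε i, y⟫ = 0) :
    ∀ i < n, ‖ε i‖ ^ 2 ≤ 1 ∧ 1 - 4 * A₁ ^ 2 * ρ ^ 2 / (1 - ρ ^ 2) ≤ ‖ε i‖ ^ 2 := by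
  intro i hi
  have h1ρ : (0:ℝ) < 1 - ρ := by linarith
  have h1ρ2 : (0:ℝ) < 1 - ρ ^ 2 := by nlinarith
  obtain ⟨v, hv⟩ : ∃ w, w = x i - ε i := ⟨_, rfl⟩
  have hmemv : v ∈ Submodule.span ℝ (x '' {j | j < i}) := by rw [hv]; exact hmem i hi
  have hεv : ⟪ε i, v⟫ = 0 := horth i hi v hmemv
  have hxi : x i = v + ε i := by rw [hv]; abel
  have hpyth : 1 = ‖v‖ ^ 2 + ‖ε i‖ ^ 2 := by
    have h1 : ‖v + ε i‖ ^ 2 = ‖v‖ ^ 2 + 2 * ⟪v, ε i⟫ + ‖ε i‖ ^ 2 := norm_add_sq_real v (ε i)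
    rw [real_inner_comm, hεv] at h1
    rw [← hxi, hunit i hi] at h1
    linarith [h1]
  have hub : ‖ε i‖ ^ 2 ≤ 1 := by nlinarith [sq_nonneg ‖v‖]
  refine ⟨hub, ?_⟩
  suffices hP : ‖v‖ ^ 2 ≤ 4 * A₁ ^ 2 * ρ ^ 2 / (1 - ρ ^ 2) by linarith
  obtain ⟨l, hlsupp, hlv⟩ := (Finsupp.mem_span_image_iff_linearCombination ℝ).mp hmemv
  rw [Finsupp.mem_supported] at hlsupp
  have hSlt : ∀ j ∈ l.support, j < i := fun j hj => hlsupp hj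
  have hSn : ∀ j ∈ l.support, j < n := fun j hj => lt_trans (hSlt j hj) hi
  set S := l.support with hS
  have hvsum : v = ∑ j ∈ S, l j • x j := by
    rw [← hlv, Finsupp.linearCombination_apply, Finsupp.sum]
  set t := ∑ j ∈ S, (l j) ^ 2 with ht
  have ht0 : (0:ℝ) ≤ t := Finset.sum_nonneg fun j _ => sq_nonneg _
  have hP0 : (0:ℝ) ≤ ‖v‖ ^ 2 := sq_nonneg _
  -- step A: ⟪v, x i⟫ = ‖v‖²
  have hA : ⟪v, x i⟫ = ‖v‖ ^ 2 := by
    have h3 : ⟪v, x i⟫ = ⟪v, v⟫ + ⟪v, ε i⟫ := by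
      conv_lhs => rw [hxi]
      rw [inner_add_right]
    rw [real_inner_comm (ε i) v, hεv, add_zero, real_inner_self_eq_norm_sq] at h3
    exact h3
  -- step B: expansion of ⟪v, x i⟫
  have hB : ⟪v, x i⟫ = ∑ j ∈ S, l j * ⟪x j, x i⟫ := by
    conv_lhs => rw [hvsum]
    rw [sum_inner]
    exact Finset.sum_congr rfl fun j _ => real_inner_smul_left _ _ _
  -- correlation bound
  have hGj : ∀ j ∈ S, |⟪x j, x i⟫| ≤ A₁ * ρ ^ (i - j) := by
    intro j hj
    have hji : j < i := hSlt j hj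
    have h1 := hcorr j (hSn j hj) i hi (Nat.ne_of_lt hji)
    have h2 : (((j:ℤ) - (i:ℤ)).natAbs) = i - j := by omega
    rwa [h2] at h1
  -- Cauchy–Schwarz step
  have hCS : (‖v‖ ^ 2) ^ 2 ≤ t * (A₁ ^ 2 * (ρ ^ 2 / (1 - ρ ^ 2))) := by
    rw [← hA, hB]
    calc (∑ j ∈ S, l j * ⟪x j, x i⟫) ^ 2
        ≤ (∑ j ∈ S, (l j) ^ 2) * ∑ j ∈ S, ⟪x j, x i⟫ ^ 2 :=
          Finset.sum_mul_sq_le_sq_mul_sq S _ _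
      _ ≤ t * (A₁ ^ 2 * (ρ ^ 2 / (1 - ρ ^ 2))) := by
          apply mul_le_mul_of_nonneg_left _ ht0
          calc ∑ j ∈ S, ⟪x j, x i⟫ ^ 2
              ≤ ∑ j ∈ S, A₁ ^ 2 * (ρ ^ 2) ^ (i - j) := by
                apply Finset.sum_le_sum
                intro j hj
                have h2 : ⟪x j, x i⟫ ^ 2 ≤ (A₁ * ρ ^ (i - j)) ^ 2 := by
                  rw [← sq_abs]
                  exact pow_le_pow_left₀ (abs_nonneg _) (hGj j hj) 2
                calc ⟪x j, x i⟫ ^ 2 ≤ (A₁ * ρ ^ (i - j)) ^ 2 := h2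
                  _ = A₁ ^ 2 * (ρ ^ 2) ^ (i - j) := by
                      rw [mul_pow, ← pow_mul, mul_comm (i - j) 2, pow_mul]
            _ = A₁ ^ 2 * ∑ j ∈ S, (ρ ^ 2) ^ (i - j) := by rw [Finset.mul_sum]
            _ ≤ A₁ ^ 2 * (ρ ^ 2 / (1 - ρ ^ 2)) := by
                apply mul_le_mul_of_nonneg_left _ (sq_nonneg A₁)
                apply aux_geom_sum (ρ ^ 2) (sq_nonneg ρ) (by nlinarith) S (fun j => i - j)
                · intro a ha b hb hab
                  simp only [Finset.mem_coe] at ha hb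
                  have ha' := hSlt a ha; have hb' := hSlt b hb
                  have hab' : i - a = i - b := hab
                  omega
                · intro j hj; have := hSlt j hj; omega
  -- double sum expansion of ‖v‖²
  have hPP : ‖v‖ ^ 2 = ∑ j ∈ S, ∑ k ∈ S, l j * (l k * ⟪x j, x k⟫) := by
    rw [← real_inner_self_eq_norm_sq]
    conv_lhs => rw [hvsum]
    rw [sum_inner]
    apply Finset.sum_congr rfl
    intro j _
    rw [real_inner_smul_left, inner_sum, Finset.mul_sum]
    apply Finset.sum_congr rfl
    intro k _
    rw [real_inner_smul_right]
  set R := ∑ j ∈ S, ∑ k ∈ S.erase j, l j * (l k * ⟪x j, x k⟫) with hR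
  have hsplit : ‖v‖ ^ 2 = t + R := by
    rw [hPP, ht, hR, ← Finset.sum_add_distrib]
    apply Finset.sum_congr rfl
    intro j hj
    rw [← Finset.add_sum_erase S _ hj]
    congr 1
    have h4 : ⟪x j, x j⟫ = 1 := by
      rw [real_inner_self_eq_norm_sq, hunit j (hSn j hj)]; norm_num
    rw [h4]; ring
  -- row bound
  have hrow : ∀ j ∈ S, ∑ k ∈ S.erase j, ρ ^ (((j:ℤ) - (k:ℤ)).natAbs) ≤ 2 * ρ / (1 - ρ) := by
    intro j _
    rw [← Finset.sum_filter_add_sum_filter_not (S.erase j) (· < j)]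
    have hh1 : ∑ k ∈ (S.erase j).filter (· < j), ρ ^ (((j:ℤ) - (k:ℤ)).natAbs) ≤ ρ / (1 - ρ) := by
      apply aux_geom_sum ρ hρ0.le (by linarith)
      · intro a ha b hb hab
        simp only [Finset.coe_filter, Set.mem_setOf_eq, Finset.mem_erase] at ha hb
        have hab' : (((j:ℤ) - (a:ℤ)).natAbs) = (((j:ℤ) - (b:ℤ)).natAbs) := hab
        omega
      · intro k hk
        simp only [Finset.mem_filter, Finset.mem_erase] at hk
        have : 1 ≤ (((j:ℤ) - (k:ℤ)).natAbs) := by omega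
        exact this
    have hh2 : ∑ k ∈ (S.erase j).filter (fun k => ¬ k < j), ρ ^ (((j:ℤ) - (k:ℤ)).natAbs)
        ≤ ρ / (1 - ρ) := by
      apply aux_geom_sum ρ hρ0.le (by linarith)
      · intro a ha b hb hab
        simp only [Finset.coe_filter, Set.mem_setOf_eq, Finset.mem_erase] at ha hb
        have hab' : (((j:ℤ) - (a:ℤ)).natAbs) = (((j:ℤ) - (b:ℤ)).natAbs) := hab
        omega
      · intro k hk
        simp only [Finset.mem_filter, Finset.mem_erase] at hk
        have : 1 ≤ (((j:ℤ) - (k:ℤ)).natAbs) := by omega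
        exact this
    rw [show (2 * ρ / (1 - ρ) : ℝ) = ρ / (1 - ρ) + ρ / (1 - ρ) by ring]
    exact add_le_add hh1 hh2
  -- bound |R|
  have hRabs : |R| ≤ t * (2 * A₁ * ρ / (1 - ρ)) := by
    have step1 : |R| ≤ ∑ j ∈ S, ∑ k ∈ S.erase j,
        ((l j) ^ 2 + (l k) ^ 2) / 2 * (A₁ * ρ ^ (((j:ℤ) - (k:ℤ)).natAbs)) := by
      calc |R| ≤ ∑ j ∈ S, |∑ k ∈ S.erase j, l j * (l k * ⟪x j, x k⟫)| :=
            Finset.abs_sum_le_sum_abs _ _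
        _ ≤ ∑ j ∈ S, ∑ k ∈ S.erase j, |l j * (l k * ⟪x j, x k⟫)| :=
            Finset.sum_le_sum fun j _ => Finset.abs_sum_le_sum_abs _ _
        _ ≤ _ := by
            apply Finset.sum_le_sum
            intro j hj
            apply Finset.sum_le_sum
            intro k hk
            have hkS : k ∈ S := Finset.mem_of_mem_erase hk
            have hkj : k ≠ j := Finset.ne_of_mem_erase hk
            have hc := hcorr j (hSn j hj) k (hSn k hkS) (Ne.symm hkj)
            have he0 : (0:ℝ) ≤ A₁ * ρ ^ (((j:ℤ) - (k:ℤ)).natAbs) := by positivity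
            have hamgm : |l j| * |l k| ≤ ((l j) ^ 2 + (l k) ^ 2) / 2 := by
              nlinarith [sq_nonneg (|l j| - |l k|), sq_abs (l j), sq_abs (l k)]
            calc |l j * (l k * ⟪x j, x k⟫)| = |l j| * |l k| * |⟪x j, x k⟫| := by
                  rw [abs_mul, abs_mul]; ring
              _ ≤ |l j| * |l k| * (A₁ * ρ ^ (((j:ℤ) - (k:ℤ)).natAbs)) :=
                  mul_le_mul_of_nonneg_left hc (by positivity)
              _ ≤ ((l j) ^ 2 + (l k) ^ 2) / 2 * (A₁ * ρ ^ (((j:ℤ) - (k:ℤ)).natAbs)) :=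
                  mul_le_mul_of_nonneg_right hamgm he0
    have step2 : ∑ j ∈ S, ∑ k ∈ S.erase j,
        ((l j) ^ 2 + (l k) ^ 2) / 2 * (A₁ * ρ ^ (((j:ℤ) - (k:ℤ)).natAbs))
        ≤ t * (2 * A₁ * ρ / (1 - ρ)) := by
      have hsplit2 : ∀ j k : ℕ, ((l j) ^ 2 + (l k) ^ 2) / 2 * (A₁ * ρ ^ (((j:ℤ) - (k:ℤ)).natAbs))
          = A₁ / 2 * ((l j) ^ 2 * ρ ^ (((j:ℤ) - (k:ℤ)).natAbs))
            + A₁ / 2 * ((l k) ^ 2 * ρ ^ (((j:ℤ) - (k:ℤ)).natAbs)) := by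
        intro j k; ring
      simp only [hsplit2, Finset.sum_add_distrib]
      have hpart1 : ∑ j ∈ S, ∑ k ∈ S.erase j,
          A₁ / 2 * ((l j) ^ 2 * ρ ^ (((j:ℤ) - (k:ℤ)).natAbs))
          ≤ A₁ / 2 * (t * (2 * ρ / (1 - ρ))) := by
        calc ∑ j ∈ S, ∑ k ∈ S.erase j, A₁ / 2 * ((l j) ^ 2 * ρ ^ (((j:ℤ) - (k:ℤ)).natAbs))
            = ∑ j ∈ S, A₁ / 2 * ((l j) ^ 2 * ∑ k ∈ S.erase j, ρ ^ (((j:ℤ) - (k:ℤ)).natAbs)) := by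
              apply Finset.sum_congr rfl
              intro j _
              rw [← Finset.mul_sum, ← Finset.mul_sum]
          _ = A₁ / 2 * ∑ j ∈ S, (l j) ^ 2 * ∑ k ∈ S.erase j, ρ ^ (((j:ℤ) - (k:ℤ)).natAbs) :=
              (Finset.mul_sum _ _ _).symm
          _ ≤ A₁ / 2 * (t * (2 * ρ / (1 - ρ))) := by
              apply mul_le_mul_of_nonneg_left _ (by positivity)
              rw [ht, Finset.sum_mul]
              apply Finset.sum_le_sum
              intro j hj
              exact mul_le_mul_of_nonneg_left (hrow j hj) (sq_nonneg _)
      have hpart2 : ∑ j ∈ S, ∑ k ∈ S.erase j,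
          A₁ / 2 * ((l k) ^ 2 * ρ ^ (((j:ℤ) - (k:ℤ)).natAbs))
          ≤ A₁ / 2 * (t * (2 * ρ / (1 - ρ))) := by
        rw [aux_sum_erase_comm S (fun j k => A₁ / 2 * ((l k) ^ 2 * ρ ^ (((j:ℤ) - (k:ℤ)).natAbs)))]
        calc ∑ k ∈ S, ∑ j ∈ S.erase k, A₁ / 2 * ((l k) ^ 2 * ρ ^ (((j:ℤ) - (k:ℤ)).natAbs))
            = ∑ k ∈ S, A₁ / 2 * ((l k) ^ 2 * ∑ j ∈ S.erase k, ρ ^ (((k:ℤ) - (j:ℤ)).natAbs)) := by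
              apply Finset.sum_congr rfl
              intro k _
              rw [← Finset.mul_sum, ← Finset.mul_sum]
              congr 1
              congr 1
              apply Finset.sum_congr rfl
              intro j _
              congr 1
              omega
          _ = A₁ / 2 * ∑ k ∈ S, (l k) ^ 2 * ∑ j ∈ S.erase k, ρ ^ (((k:ℤ) - (j:ℤ)).natAbs) :=
              (Finset.mul_sum _ _ _).symm
          _ ≤ A₁ / 2 * (t * (2 * ρ / (1 - ρ))) := by
              apply mul_le_mul_of_nonneg_left _ (by positivity)
              rw [ht, Finset.sum_mul]
              apply Finset.sum_le_sum
              intro k hk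
              exact mul_le_mul_of_nonneg_left (hrow k hk) (sq_nonneg _)
      have heq : A₁ / 2 * (t * (2 * ρ / (1 - ρ))) + A₁ / 2 * (t * (2 * ρ / (1 - ρ)))
          = t * (2 * A₁ * ρ / (1 - ρ)) := by ring
      linarith
    linarith
  -- lower bound on ‖v‖² in terms of t
  have hlow : t * (1 - 2 * A₁ * ρ / (1 - ρ)) ≤ ‖v‖ ^ 2 := by
    have hexp : t * (1 - 2 * A₁ * ρ / (1 - ρ)) = t - t * (2 * A₁ * ρ / (1 - ρ)) := by ring
    rw [hsplit, hexp]
    linarith [neg_abs_le R, hRabs]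
  have hD : 2 * A₁ * ρ / (1 - ρ) ≤ 4 / 15 := by
    rw [div_le_iff₀ h1ρ]
    nlinarith
  -- combine
  have hq0 : (0:ℝ) < A₁ ^ 2 * (ρ ^ 2 / (1 - ρ ^ 2)) := by positivity
  have h1 : t * (11 / 15) ≤ ‖v‖ ^ 2 := by nlinarith
  have hgoal : ‖v‖ ^ 2 ≤ 4 * (A₁ ^ 2 * (ρ ^ 2 / (1 - ρ ^ 2))) := by
    rcases eq_or_lt_of_le hP0 with h0 | h0
    · nlinarith
    · have hA' : t * (11 / 15) * (A₁ ^ 2 * (ρ ^ 2 / (1 - ρ ^ 2)))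
          ≤ ‖v‖ ^ 2 * (A₁ ^ 2 * (ρ ^ 2 / (1 - ρ ^ 2))) :=
        mul_le_mul_of_nonneg_right h1 hq0.le
      have h2 : 11 / 15 * (‖v‖ ^ 2) ^ 2 ≤ ‖v‖ ^ 2 * (A₁ ^ 2 * (ρ ^ 2 / (1 - ρ ^ 2))) := by
        nlinarith [hCS]
      nlinarith [mul_pos h0 hq0, h2]
  calc ‖v‖ ^ 2 ≤ 4 * (A₁ ^ 2 * (ρ ^ 2 / (1 - ρ ^ 2))) := hgoal
    _ = 4 * A₁ ^ 2 * ρ ^ 2 / (1 - ρ ^ 2) := by ring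
end

section
/- Under the hypotheses of the previous Gram–Schmidt lemma (unit vectors x_1,…,x_n with |⟨x_i,x_{i'}⟩| ≤ A_1 ρ^{|i−i'|}, 0 < ρ < 1/4, A_1 ρ < 0.1), write x_k = Σ_{i<k} a_{k,i} ε_i + ε_k for the Gram–Schmidt expansion. Then |a_{k,k'}| ≤ 2 A_1 ρ^{k − k'} for all 1 ≤ k' < k ≤ n. -/
open RealInnerProductSpace

/-- **Gram–Schmidt expansion coefficients of weakly correlated unit vectors.**
Let `x_1, …, x_n` be unit vectors in a real Hilbert space with
`|⟨x_i, x_{i'}⟩| ≤ A_1 ρ^{|i - i'|}` for `i ≠ i'`, where `0 < ρ < 1/4` and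
`A_1 ρ < 0.1`.  Let `ε_i` be the Gram–Schmidt residuals and write
`x_k = Σ_{i<k} a_{k,i} ε_i + ε_k`.  Then `|a_{k,k'}| ≤ 2 A_1 ρ^{k-k'}` for all
`k' < k`. -/
theorem gram_schmidt_coefficient_bound
    {H : Type*} [NormedAddCommGroup H] [InnerProductSpace ℝ H] [CompleteSpace H]
    (n : ℕ) (x ε : ℕ → H) (a : ℕ → ℕ → ℝ) (A₁ ρ : ℝ)
    (hρ0 : 0 < ρ) (hρ : ρ < 1 / 4) (hA₁ : 0 < A₁) (hA₁ρ : A₁ * ρ < 0.1)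
    (hunit : ∀ i < n, ‖x i‖ = 1)
    (hcorr : ∀ i < n, ∀ i' < n, i ≠ i' →
      |⟪x i, x i'⟫| ≤ A₁ * ρ ^ (Int.natAbs ((i : ℤ) - (i' : ℤ))))
    (hmem : ∀ i < n, x i - ε i ∈ Submodule.span ℝ (x '' {j | j < i}))
    (horth : ∀ i < n, ∀ y ∈ Submodule.span ℝ (x '' {j | j < i}), ⟪ε i, y⟫ = 0)
    (hexp : ∀ k < n, x k = (∑ i ∈ Finset.range k, a k i • ε i) + ε k) :
    ∀ k < n, ∀ k' < k, |a k k'| ≤ 2 * A₁ * ρ ^ (k - k') := by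
  -- orthogonality of the residuals
  have hio : ∀ i, ∀ j, j < i → i < n → ⟪ε i, ε j⟫ = 0 := by
    intro i j hji hin
    apply horth i hin
    have h1 : x j ∈ Submodule.span ℝ (x '' {l | l < i}) :=
      Submodule.subset_span ⟨j, hji, rfl⟩
    have h2 : x j - ε j ∈ Submodule.span ℝ (x '' {l | l < i}) := by
      refine Submodule.span_mono (Set.image_mono ?_) (hmem j (lt_trans hji hin))
      intro l hl
      exact lt_trans hl hji
    have : ε j = x j - (x j - ε j) := by abel
    rw [this]
    exact sub_mem h1 h2
  have hioo : ∀ i < n, ∀ j < n, i ≠ j → ⟪ε i, ε j⟫ = 0 := by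
    intro i hin j hjn hij
    rcases lt_or_gt_of_ne hij with h | h
    · rw [real_inner_comm]; exact hio j i h hjn
    · exact hio i j h hin
  -- ⟪ε i, x m⟫ for i < m
  have hex : ∀ m < n, ∀ i < m, ⟪ε i, x m⟫ = a m i * ‖ε i‖ ^ 2 := by
    intro m hm i him
    rw [hexp m hm, inner_add_right, inner_sum]
    have h1 : ⟪ε i, ε m⟫ = 0 := by
      rw [real_inner_comm]; exact hio m i him hm
    rw [h1, add_zero]
    rw [Finset.sum_eq_single i]
    · rw [real_inner_smul_right, real_inner_self_eq_norm_sq]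
    · intro j hj hji
      rw [real_inner_smul_right,
        hioo i (lt_trans him hm) j (lt_trans (Finset.mem_range.mp hj) hm)
          (Ne.symm hji), mul_zero]
    · intro h
      exact absurd (Finset.mem_range.mpr him) h
  -- ⟪ε m, x m⟫
  have hself : ∀ m < n, ⟪ε m, x m⟫ = ‖ε m‖ ^ 2 := by
    intro m hm
    rw [hexp m hm, inner_add_right, inner_sum, real_inner_self_eq_norm_sq]
    have : ∀ j ∈ Finset.range m, ⟪ε m, a m j • ε j⟫ = 0 := by
      intro j hj
      rw [real_inner_smul_right, hio m j (Finset.mem_range.mp hj) hm, mul_zero]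
    rw [Finset.sum_congr rfl this, Finset.sum_const_zero, zero_add]
  -- ⟪ε i, x m⟫ = 0 for m < i
  have hzero : ∀ m, ∀ i, m < i → i < n → ⟪ε i, x m⟫ = 0 := by
    intro m i hmi hin
    exact horth i hin (x m) (Submodule.subset_span ⟨m, hmi, rfl⟩)
  -- norm expansion
  have hxx : ∀ m < n, (1 : ℝ) =
      ∑ i ∈ Finset.range m, (a m i) ^ 2 * ‖ε i‖ ^ 2 + ‖ε m‖ ^ 2 := by
    intro m hm
    have h1 : ⟪x m, x m⟫ = 1 := by
      rw [real_inner_self_eq_norm_sq, hunit m hm]; norm_num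
    rw [← h1]
    nth_rw 1 [hexp m hm]
    rw [inner_add_left, sum_inner, hself m hm]
    congr 1
    refine Finset.sum_congr rfl ?_
    intro i hi
    rw [real_inner_smul_left, hex m hm i (Finset.mem_range.mp hi), sq]
    ring
  have hnormsq_nonneg : ∀ i, (0:ℝ) ≤ ‖ε i‖ ^ 2 := fun i => sq_nonneg _
  have hnorm_le : ∀ m < n, ‖ε m‖ ^ 2 ≤ 1 := by
    intro m hm
    have := hxx m hm
    have hsum : (0:ℝ) ≤ ∑ i ∈ Finset.range m, (a m i) ^ 2 * ‖ε i‖ ^ 2 :=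
      Finset.sum_nonneg fun i _ => mul_nonneg (sq_nonneg _) (sq_nonneg _)
    linarith
  -- cross inner product expansion: for k' < k < n
  have hcross : ∀ k < n, ∀ k' < k, ⟪x k, x k'⟫ =
      ∑ i ∈ Finset.range k', a k i * (a k' i * ‖ε i‖ ^ 2)
        + a k k' * ‖ε k'‖ ^ 2 := by
    intro k hk k' hk'
    have hk'n : k' < n := lt_trans hk' hk
    conv_lhs => rw [hexp k hk]
    rw [inner_add_left, sum_inner, hzero k' k hk' hk, add_zero]
    have hstep : ∀ i ∈ Finset.range k, ⟪a k i • ε i, x k'⟫ =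
        (if i < k' then a k i * (a k' i * ‖ε i‖ ^ 2)
         else if i = k' then a k k' * ‖ε k'‖ ^ 2 else 0) := by
      intro i hi
      have hik : i < k := Finset.mem_range.mp hi
      rw [real_inner_smul_left]
      by_cases h1 : i < k'
      · rw [if_pos h1, hex k' hk'n i h1]
      · rw [if_neg h1]
        by_cases h2 : i = k'
        · subst h2
          rw [if_pos rfl, hself i hk'n]
        · rw [if_neg h2]
          have : k' < i := lt_of_le_of_ne (not_lt.mp h1) (Ne.symm h2)
          rw [hzero k' i this (lt_trans hik hk), mul_zero]
    rw [Finset.sum_congr rfl hstep]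
    rw [Finset.sum_ite, Finset.sum_ite]
    have e1 : Finset.filter (fun i => i < k') (Finset.range k) = Finset.range k' := by
      ext i
      simp only [Finset.mem_filter, Finset.mem_range]
      exact ⟨fun h => h.2, fun h => ⟨lt_trans h hk', h⟩⟩
    have e2 : Finset.filter (fun i => i = k')
        (Finset.filter (fun i => ¬ i < k') (Finset.range k)) = {k'} := by
      ext i
      simp only [Finset.mem_filter, Finset.mem_range, Finset.mem_singleton]
      constructor
      · rintro ⟨_, h⟩; exact h
      · rintro rfl; exact ⟨⟨hk', lt_irrefl _⟩, rfl⟩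
    rw [e1, e2, Finset.sum_singleton, Finset.sum_const_zero, add_zero]
  -- geometric sum bound
  have hρ2 : ρ ^ 2 < 1 := by nlinarith
  have hgeo : ∀ m, ∑ i ∈ Finset.range m, (ρ ^ 2) ^ (m - i) ≤ ρ ^ 2 / (1 - ρ ^ 2) := by
    intro m
    induction m with
    | zero =>
      simp only [Finset.range_zero, Finset.sum_empty]
      have h : (0:ℝ) < 1 - ρ ^ 2 := by nlinarith
      positivity
    | succ m ih =>
      have hstep : ∑ i ∈ Finset.range m, (ρ ^ 2) ^ (m + 1 - i)
          = ρ ^ 2 * ∑ i ∈ Finset.range m, (ρ ^ 2) ^ (m - i) := by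
        rw [Finset.mul_sum]
        refine Finset.sum_congr rfl ?_
        intro i hi
        have him : i < m := Finset.mem_range.mp hi
        have : m + 1 - i = (m - i) + 1 := by omega
        rw [this, pow_succ]
        ring
      rw [Finset.sum_range_succ, hstep]
      have h1 : (ρ ^ 2) ^ (m + 1 - m) = ρ ^ 2 := by
        have : m + 1 - m = 1 := by omega
        rw [this, pow_one]
      rw [h1]
      have h2 : ρ ^ 2 * ∑ i ∈ Finset.range m, (ρ ^ 2) ^ (m - i)
          ≤ ρ ^ 2 * (ρ ^ 2 / (1 - ρ ^ 2)) := by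
        apply mul_le_mul_of_nonneg_left ih (sq_nonneg ρ)
      have hne : (1:ℝ) - ρ ^ 2 ≠ 0 := by nlinarith
      have h3 : ρ ^ 2 * (ρ ^ 2 / (1 - ρ ^ 2)) + ρ ^ 2 = ρ ^ 2 / (1 - ρ ^ 2) := by
        field_simp
        ring
      linarith
  -- the main induction
  intro k
  induction k using Nat.strong_induction_on with
  | _ k IHk =>
    intro hk k'
    induction k' using Nat.strong_induction_on with
    | _ k' IHk' =>
      intro hk'k
      have hk'n : k' < n := lt_trans hk'k hk
      -- bounds from induction hypotheses
      have hbk' : ∀ i < k', |a k' i| ≤ 2 * A₁ * ρ ^ (k' - i) :=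
        fun i hi => IHk k' hk'k hk'n i hi
      have hbk : ∀ i < k', |a k i| ≤ 2 * A₁ * ρ ^ (k - i) :=
        fun i hi => IHk' i hi (lt_trans hi hk'k)
      set g : ℝ := ∑ i ∈ Finset.range k', (ρ ^ 2) ^ (k' - i) with hg_def
      have hg : g ≤ ρ ^ 2 / (1 - ρ ^ 2) := hgeo k'
      have hg0 : 0 ≤ g := Finset.sum_nonneg fun i _ => pow_nonneg (sq_nonneg ρ) _
      -- lower bound on ‖ε k'‖²
      have hE : 1 - 4 * A₁ ^ 2 * g ≤ ‖ε k'‖ ^ 2 := by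
        have h1 := hxx k' hk'n
        have h2 : ∑ i ∈ Finset.range k', (a k' i) ^ 2 * ‖ε i‖ ^ 2
            ≤ 4 * A₁ ^ 2 * g := by
          rw [hg_def, Finset.mul_sum]
          refine Finset.sum_le_sum ?_
          intro i hi
          have him : i < k' := Finset.mem_range.mp hi
          have ha := hbk' i him
          have hn1 : ‖ε i‖ ^ 2 ≤ 1 := hnorm_le i (lt_trans him hk'n)
          have hn0 : (0:ℝ) ≤ ‖ε i‖ ^ 2 := sq_nonneg _
          have h3 : (a k' i) ^ 2 ≤ (2 * A₁ * ρ ^ (k' - i)) ^ 2 := by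
            rw [← sq_abs]
            exact pow_le_pow_left₀ (abs_nonneg _) ha 2
          have h4 : (2 * A₁ * ρ ^ (k' - i)) ^ 2 = 4 * A₁ ^ 2 * (ρ ^ 2) ^ (k' - i) := by
            rw [← pow_mul, mul_comm 2 (k' - i), pow_mul]
            ring
          nlinarith [sq_nonneg (a k' i)]
        linarith
      -- bound the cross sum
      have hScross : |∑ i ∈ Finset.range k', a k i * (a k' i * ‖ε i‖ ^ 2)|
          ≤ 4 * A₁ ^ 2 * ρ ^ (k - k') * g := by
        calc |∑ i ∈ Finset.range k', a k i * (a k' i * ‖ε i‖ ^ 2)|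
            ≤ ∑ i ∈ Finset.range k', |a k i * (a k' i * ‖ε i‖ ^ 2)| :=
              Finset.abs_sum_le_sum_abs _ _
          _ ≤ ∑ i ∈ Finset.range k', 4 * A₁ ^ 2 * ρ ^ (k - k') * (ρ ^ 2) ^ (k' - i) := by
              refine Finset.sum_le_sum ?_
              intro i hi
              have him : i < k' := Finset.mem_range.mp hi
              have ha1 := hbk i him
              have ha2 := hbk' i him
              have hn1 : ‖ε i‖ ^ 2 ≤ 1 := hnorm_le i (lt_trans him hk'n)
              have hn0 : (0:ℝ) ≤ ‖ε i‖ ^ 2 := sq_nonneg _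
              rw [abs_mul, abs_mul, abs_of_nonneg hn0]
              have hsplit : ρ ^ (k - i) = ρ ^ (k - k') * ρ ^ (k' - i) := by
                rw [← pow_add]
                congr 1
                omega
              have hq : (ρ ^ 2) ^ (k' - i) = ρ ^ (k' - i) * ρ ^ (k' - i) := by
                rw [← pow_add, ← pow_mul]
                congr 1
                omega
              have hp1 : (0:ℝ) ≤ ρ ^ (k - i) := by positivity
              have hp2 : (0:ℝ) ≤ ρ ^ (k' - i) := by positivity
              have habs1 : (0:ℝ) ≤ |a k i| := abs_nonneg _
              have habs2 : (0:ℝ) ≤ |a k' i| := abs_nonneg _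
              calc |a k i| * (|a k' i| * ‖ε i‖ ^ 2)
                  ≤ (2 * A₁ * ρ ^ (k - i)) * ((2 * A₁ * ρ ^ (k' - i)) * 1) := by
                    apply mul_le_mul ha1 _ (mul_nonneg habs2 hn0) (by positivity)
                    apply mul_le_mul ha2 hn1 hn0 (by positivity)
                _ = 4 * A₁ ^ 2 * ρ ^ (k - k') * (ρ ^ 2) ^ (k' - i) := by
                    rw [hq, hsplit]; ring
          _ = 4 * A₁ ^ 2 * ρ ^ (k - k') * g := by
              rw [hg_def, Finset.mul_sum]
      -- bound on inner product
      have hinner : |⟪x k, x k'⟫| ≤ A₁ * ρ ^ (k - k') := by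
        have h := hcorr k hk k' hk'n (Nat.ne_of_gt hk'k)
        have : Int.natAbs ((k : ℤ) - (k' : ℤ)) = k - k' := by omega
        rwa [this] at h
      -- combine
      have hmain := hcross k hk k' hk'k
      have key : |a k k'| * ‖ε k'‖ ^ 2
          ≤ A₁ * ρ ^ (k - k') + 4 * A₁ ^ 2 * ρ ^ (k - k') * g := by
        have : a k k' * ‖ε k'‖ ^ 2
            = ⟪x k, x k'⟫ - ∑ i ∈ Finset.range k', a k i * (a k' i * ‖ε i‖ ^ 2) := by
          rw [hmain]; ring
        calc |a k k'| * ‖ε k'‖ ^ 2 = |a k k' * ‖ε k'‖ ^ 2| := by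
              rw [abs_mul, abs_of_nonneg (sq_nonneg ‖ε k'‖)]
          _ = |⟪x k, x k'⟫ - ∑ i ∈ Finset.range k', a k i * (a k' i * ‖ε i‖ ^ 2)| := by
              rw [this]
          _ ≤ |⟪x k, x k'⟫| + |∑ i ∈ Finset.range k', a k i * (a k' i * ‖ε i‖ ^ 2)| := by
              rw [sub_eq_add_neg]
              exact (abs_add_le _ _).trans (le_of_eq (by rw [abs_neg]))
          _ ≤ A₁ * ρ ^ (k - k') + 4 * A₁ ^ 2 * ρ ^ (k - k') * g := by
              linarith [hinner, hScross]
      -- numeric finish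
      have hP0 : (0:ℝ) < ρ ^ (k - k') := by positivity
      have hρsq : ρ ^ 2 < 1/16 := by
        nlinarith [mul_pos (show (0:ℝ) < 1/4 - ρ by linarith) (show (0:ℝ) < 1/4 + ρ by linarith)]
      have hρ2pos : (0:ℝ) < 1 - ρ ^ 2 := by linarith
      have hρ2b : (1:ℝ) - ρ ^ 2 > 15/16 := by linarith
      have hg' : g * (1 - ρ ^ 2) ≤ ρ ^ 2 := (le_div_iff₀ hρ2pos).mp hg
      have hAg : A₁ * (g * (1 - ρ ^ 2)) ≤ A₁ * ρ ^ 2 :=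
        mul_le_mul_of_nonneg_left hg' hA₁.le
      have hA2g : A₁ ^ 2 * (g * (1 - ρ ^ 2)) ≤ A₁ ^ 2 * ρ ^ 2 :=
        mul_le_mul_of_nonneg_left hg' (sq_nonneg A₁)
      have hAρ2 : A₁ * ρ ^ 2 < 0.025 := by
        have h := mul_lt_mul'' hA₁ρ hρ (mul_pos hA₁ hρ0).le hρ0.le
        calc A₁ * ρ ^ 2 = (A₁ * ρ) * ρ := by ring
          _ < 0.1 * (1/4) := h
          _ = 0.025 := by norm_num
      have hA2ρ2 : A₁ ^ 2 * ρ ^ 2 < 0.01 := by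
        have h := mul_lt_mul'' hA₁ρ hA₁ρ (mul_pos hA₁ hρ0).le (mul_pos hA₁ hρ0).le
        calc A₁ ^ 2 * ρ ^ 2 = (A₁ * ρ) * (A₁ * ρ) := by ring
          _ < 0.1 * 0.1 := h
          _ = 0.01 := by norm_num
      have hAgnn : (0:ℝ) ≤ A₁ * g := mul_nonneg hA₁.le hg0
      have hA2gnn : (0:ℝ) ≤ A₁ ^ 2 * g := mul_nonneg (sq_nonneg _) hg0
      have hAg' : A₁ * g ≤ 1/30 := by
        have h1 : (A₁ * g) * (15/16) ≤ (A₁ * g) * (1 - ρ ^ 2) :=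
          mul_le_mul_of_nonneg_left hρ2b.le hAgnn
        have h2 : (A₁ * g) * (1 - ρ ^ 2) = A₁ * (g * (1 - ρ ^ 2)) := by ring
        linarith [hAg, hAρ2]
      have hA2g' : A₁ ^ 2 * g ≤ 1/60 := by
        have h1 : (A₁ ^ 2 * g) * (15/16) ≤ (A₁ ^ 2 * g) * (1 - ρ ^ 2) :=
          mul_le_mul_of_nonneg_left hρ2b.le hA2gnn
        have h2 : (A₁ ^ 2 * g) * (1 - ρ ^ 2) = A₁ ^ 2 * (g * (1 - ρ ^ 2)) := by ring
        linarith [hA2g, hA2ρ2]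
      have hfinal : A₁ + 4 * A₁ ^ 2 * g ≤ 2 * A₁ * (1 - 4 * A₁ ^ 2 * g) := by
        have e1 : A₁ * (A₁ * g) ≤ A₁ * (1/30) :=
          mul_le_mul_of_nonneg_left hAg' hA₁.le
        have e2 : A₁ * (A₁ ^ 2 * g) ≤ A₁ * (1/60) :=
          mul_le_mul_of_nonneg_left hA2g' hA₁.le
        have e3 : 4 * A₁ ^ 2 * g = 4 * (A₁ * (A₁ * g)) := by ring
        have e5 : 2 * A₁ * (1 - 4 * A₁ ^ 2 * g)
            = 2 * A₁ - 8 * (A₁ * (A₁ ^ 2 * g)) := by ring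
        linarith
      have habs0 : (0:ℝ) ≤ |a k k'| := abs_nonneg _
      have step1 : |a k k'| * (1 - 4 * A₁ ^ 2 * g) ≤ |a k k'| * ‖ε k'‖ ^ 2 :=
        mul_le_mul_of_nonneg_left hE habs0
      have step2 : |a k k'| * (1 - 4 * A₁ ^ 2 * g)
          ≤ ρ ^ (k - k') * (2 * A₁ * (1 - 4 * A₁ ^ 2 * g)) := by
        have heq1 : A₁ * ρ ^ (k - k') + 4 * A₁ ^ 2 * ρ ^ (k - k') * g
            = ρ ^ (k - k') * (A₁ + 4 * A₁ ^ 2 * g) := by ring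
        have h5 : ρ ^ (k - k') * (A₁ + 4 * A₁ ^ 2 * g)
            ≤ ρ ^ (k - k') * (2 * A₁ * (1 - 4 * A₁ ^ 2 * g)) :=
          mul_le_mul_of_nonneg_left hfinal (le_of_lt hP0)
        linarith [key, step1]
      have hden : (0:ℝ) < 1 - 4 * A₁ ^ 2 * g := by linarith
      have heq2 : ρ ^ (k - k') * (2 * A₁ * (1 - 4 * A₁ ^ 2 * g))
          = (2 * A₁ * ρ ^ (k - k')) * (1 - 4 * A₁ ^ 2 * g) := by ring
      exact le_of_mul_le_mul_right (by linarith [step2, heq2]) hden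
end

section
/- Let x_1,…,x_n be unit vectors in a Hilbert space with |⟨x_i,x_{i'}⟩| ≤ A_1 ρ^{|i−i'|} (0 < ρ < 1/4, A_1 ρ < 0.1), and let \hat x_i denote the projection of x_i onto span(x_1,…,x_{i−1}). Then for all i ≥ i', |⟨\hat x_i, \hat x_{i'}⟩| ≤ 4 A_1^2 ρ^{i − i' + 2}/(1 − ρ^2). -/
open RealInnerProductSpace

set_option maxHeartbeats 1000000

/-- **Inner products of Gram–Schmidt projections of weakly correlated vectors.**
Let `x_1, …, x_n` be unit vectors in a real Hilbert space with
`|⟨x_i, x_{i'}⟩| ≤ A_1 ρ^{|i - i'|}` for `i ≠ i'`, where `0 < ρ < 1/4` and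
`A_1 ρ < 0.1`.  Let `ε_i` be the Gram–Schmidt residuals, so `x̂_i = x_i − ε_i`
is the orthogonal projection of `x_i` onto the span of `x_1, …, x_{i-1}`.
Then for all `i ≥ i'`,
`|⟨x̂_i, x̂_{i'}⟩| ≤ 4 A_1² ρ^{i - i' + 2}/(1 − ρ²)`. -/
theorem gram_schmidt_projection_inner_bound
    {H : Type*} [NormedAddCommGroup H] [InnerProductSpace ℝ H] [CompleteSpace H]
    (n : ℕ) (x ε : ℕ → H) (A₁ ρ : ℝ)
    (hρ0 : 0 < ρ) (hρ : ρ < 1 / 4) (hA₁ : 0 < A₁) (hA₁ρ : A₁ * ρ < 0.1)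
    (hunit : ∀ i < n, ‖x i‖ = 1)
    (hcorr : ∀ i < n, ∀ i' < n, i ≠ i' →
      |⟪x i, x i'⟫| ≤ A₁ * ρ ^ (Int.natAbs ((i : ℤ) - (i' : ℤ))))
    (hmem : ∀ i < n, x i - ε i ∈ Submodule.span ℝ (x '' {j | j < i}))
    (horth : ∀ i < n, ∀ y ∈ Submodule.span ℝ (x '' {j | j < i}), ⟪ε i, y⟫ = 0) :
    ∀ i < n, ∀ i' ≤ i,
      |⟪x i - ε i, x i' - ε i'⟫| ≤ 4 * A₁ ^ 2 * ρ ^ (i - i' + 2) / (1 - ρ ^ 2) := by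
  have hρ2 : ρ ^ 2 < 1 := by nlinarith
  have hρ2' : (0:ℝ) < 1 - ρ ^ 2 := by linarith
  set T : ℕ → Submodule ℝ H := fun m => Submodule.span ℝ (x '' {j | j < m}) with hT
  have hxmem : ∀ l m, l < m → x l ∈ T m := by
    intro l m hlm
    exact Submodule.subset_span ⟨l, hlm, rfl⟩
  have hTmono : ∀ {m m' : ℕ}, m ≤ m' → T m ≤ T m' := by
    intro m m' h
    exact Submodule.span_mono (Set.image_mono (fun j hj => lt_of_lt_of_le hj h))
  have hεmem : ∀ l, l < n → ∀ m, l < m → ε l ∈ T m := by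
    intro l hl m hlm
    have h1 : x l ∈ T m := hxmem l m hlm
    have h2 : x l - ε l ∈ T m := hTmono (Nat.le_of_lt hlm) (hmem l hl)
    have : ε l = x l - (x l - ε l) := by abel
    rw [this]
    exact Submodule.sub_mem _ h1 h2
  have hεorth : ∀ k, k < n → ∀ l, l < k → ⟪ε k, ε l⟫ = 0 := by
    intro k hk l hlk
    exact horth k hk (ε l) (hεmem l (hlk.trans hk) k hlk)
  have hxε : ∀ i, i < n → ⟪x i, ε i⟫ = ‖ε i‖ ^ 2 := by
    intro i hi
    have h0 : ⟪ε i, x i - ε i⟫ = 0 := horth i hi _ (hmem i hi)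
    have key : x i = (x i - ε i) + ε i := by abel
    calc ⟪x i, ε i⟫ = ⟪(x i - ε i) + ε i, ε i⟫ := by rw [← key]
      _ = ⟪x i - ε i, ε i⟫ + ⟪ε i, ε i⟫ := inner_add_left _ _ _
      _ = ‖ε i‖ ^ 2 := by
          have h0' : ⟪x i - ε i, ε i⟫ = (0:ℝ) := by rw [real_inner_comm]; exact h0
          rw [h0', zero_add, real_inner_self_eq_norm_sq]
  have hεle : ∀ i, i < n → ‖ε i‖ ^ 2 ≤ 1 := by
    intro i hi
    have h1 : ⟪x i, ε i⟫ ≤ ‖x i‖ * ‖ε i‖ := real_inner_le_norm _ _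
    rw [hxε i hi, hunit i hi, one_mul] at h1
    nlinarith [norm_nonneg (ε i)]
  set a : ℕ → ℕ → ℝ := fun k l => ⟪x k, ε l⟫ / ‖ε l‖ ^ 2 with ha_def
  -- expansion of the projection in the orthogonal residual system
  have hexp : ∀ k, k < n → x k - ε k = ∑ l ∈ Finset.range k, a k l • ε l := by
    intro k hk
    set y : H := (x k - ε k) - ∑ l ∈ Finset.range k, a k l • ε l with hy
    have hsum_mem : (∑ l ∈ Finset.range k, a k l • ε l) ∈ T k := by
      refine Submodule.sum_mem _ (fun l hl => ?_)
      rw [Finset.mem_range] at hl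
      exact Submodule.smul_mem _ _ (hεmem l (hl.trans hk) k hl)
    have hyT : y ∈ T k := Submodule.sub_mem _ (hmem k hk) hsum_mem
    have hyorth : ∀ l, l < k → ⟪y, ε l⟫ = 0 := by
      intro l hlk
      have hln : l < n := hlk.trans hk
      have h1 : ⟪x k - ε k, ε l⟫ = ⟪x k, ε l⟫ := by
        rw [inner_sub_left, hεorth k hk l hlk, sub_zero]
      have h2 : ⟪∑ l' ∈ Finset.range k, a k l' • ε l', ε l⟫ = a k l * ‖ε l‖ ^ 2 := by
        rw [sum_inner]
        rw [Finset.sum_eq_single l]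
        · rw [real_inner_smul_left, real_inner_self_eq_norm_sq]
        · intro l' hl' hne
          rw [Finset.mem_range] at hl'
          rw [real_inner_smul_left]
          rcases lt_or_gt_of_ne hne with h | h
          · rw [real_inner_comm, hεorth l hln l' h, mul_zero]
          · rw [hεorth l' (hl'.trans hk) l h, mul_zero]
        · intro h
          exact absurd (Finset.mem_range.mpr hlk) h
      rw [hy, inner_sub_left, h1, h2]
      rcases eq_or_ne (‖ε l‖ ^ 2) 0 with h0 | h0
      · have : ε l = 0 := by
          have := sq_eq_zero_iff.mp h0
          simpa using this
        rw [this, inner_zero_right]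
        simp
      · rw [ha_def]
        field_simp
        rw [div_self (fun h => h0 (by rw [h]; ring))]
        ring
    -- the span of the x's is contained in the span of the ε's
    have hspan : T k ≤ Submodule.span ℝ (ε '' {l | l < k}) := by
      rw [hT]
      rw [Submodule.span_le]
      rintro _ ⟨j, hj, rfl⟩
      simp only [Set.mem_setOf_eq] at hj
      induction j using Nat.strong_induction_on with
      | _ j IHj =>
        have h1 : ε j ∈ Submodule.span ℝ (ε '' {l | l < k}) :=
          Submodule.subset_span ⟨j, hj, rfl⟩
        have h2 : x j - ε j ∈ Submodule.span ℝ (ε '' {l | l < k}) := by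
          have := hmem j (hj.trans hk)
          refine Submodule.span_le.mpr ?_ this
          rintro _ ⟨j', hj', rfl⟩
          simp only [Set.mem_setOf_eq] at hj'
          exact IHj j' hj' (hj'.trans hj)
        have : x j = ε j + (x j - ε j) := by abel
        rw [this]
        exact Submodule.add_mem _ h1 h2
    have hyε : y ∈ Submodule.span ℝ (ε '' {l | l < k}) := hspan hyT
    have hperp : ∀ z ∈ Submodule.span ℝ (ε '' {l | l < k}), ⟪y, z⟫ = 0 := by
      intro z hz
      refine Submodule.span_induction ?_ ?_ ?_ ?_ hz
      · rintro _ ⟨l, hl, rfl⟩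
        exact hyorth l hl
      · exact inner_zero_right y
      · intro u v _ _ hu hv
        rw [inner_add_right, hu, hv, add_zero]
      · intro c u _ hu
        rw [real_inner_smul_right, hu, mul_zero]
    have hyy : ⟪y, y⟫ = 0 := hperp y hyε
    have : y = 0 := by rwa [inner_self_eq_zero] at hyy
    rw [hy] at this
    exact sub_eq_zero.mp this
  -- geometric sum bound
  have hgeom : ∀ m : ℕ, ∑ l ∈ Finset.range m, (ρ ^ 2) ^ (m - l) ≤ ρ ^ 2 / (1 - ρ ^ 2) := by
    intro m
    have h1 : ∑ l ∈ Finset.range m, (ρ ^ 2) ^ (m - l)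
        = ∑ j ∈ Finset.range m, (ρ ^ 2) ^ (j + 1) := by
      rw [← Finset.sum_range_reflect]
      refine Finset.sum_congr rfl (fun j hj => ?_)
      rw [Finset.mem_range] at hj
      congr 1
      omega
    have h2 : ∑ j ∈ Finset.range m, (ρ ^ 2) ^ (j + 1)
        = ρ ^ 2 * ∑ j ∈ Finset.range m, (ρ ^ 2) ^ j := by
      rw [Finset.mul_sum]
      exact Finset.sum_congr rfl (fun j _ => by ring)
    have h3 : ∑ j ∈ Finset.range m, (ρ ^ 2) ^ j ≤ 1 / (1 - ρ ^ 2) := by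
      have hne : ρ ^ 2 ≠ 1 := ne_of_lt hρ2
      rw [geom_sum_eq hne]
      have heq : ((ρ ^ 2) ^ m - 1) / (ρ ^ 2 - 1) = (1 - (ρ ^ 2) ^ m) / (1 - ρ ^ 2) := by
        rw [div_eq_div_iff (by linarith) (by linarith)]
        ring
      rw [heq]
      have hpm : (0:ℝ) ≤ (ρ ^ 2) ^ m := by positivity
      gcongr
      linarith
    rw [h1, h2]
    calc ρ ^ 2 * ∑ j ∈ Finset.range m, (ρ ^ 2) ^ j ≤ ρ ^ 2 * (1 / (1 - ρ ^ 2)) :=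
          mul_le_mul_of_nonneg_left h3 (by positivity)
      _ = ρ ^ 2 / (1 - ρ ^ 2) := by ring
  -- numeric facts
  have hρsq : ρ ^ 2 < 1 / 16 := by nlinarith
  set q : ℝ := ρ ^ 2 / (1 - ρ ^ 2) with hqdef
  have hq0 : 0 ≤ q := by positivity
  have hq1 : A₁ * q ≤ 2 / 75 := by
    rw [hqdef, ← mul_div_assoc, div_le_iff₀ hρ2']
    nlinarith [mul_pos hA₁ hρ0, mul_lt_mul_of_pos_right hA₁ρ hρ0]
  have hq2 : A₁ ^ 2 * q ≤ 4 / 375 := by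
    rw [hqdef, ← mul_div_assoc, div_le_iff₀ hρ2']
    have hAρsq : (A₁ * ρ) ^ 2 < 0.01 := by nlinarith [mul_pos hA₁ hρ0]
    nlinarith [hAρsq]
  have key : A₁ + 4 * A₁ ^ 2 * q ≤ 2 * A₁ * (1 - 4 * A₁ ^ 2 * q) := by
    nlinarith [mul_le_mul_of_nonneg_left hq1 hA₁.le, mul_le_mul_of_nonneg_left hq2 hA₁.le]
  -- the main inductive estimate
  have hmain : ∀ k, k < n → ∀ i, k < i → i < n →
      |⟪x i, ε k⟫| ≤ 2 * A₁ * ρ ^ (i - k) * ‖ε k‖ ^ 2 := by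
    intro k
    induction k using Nat.strong_induction_on with
    | _ k IH =>
      intro hk i hki hin
      have haA : ∀ l, l < k → |a k l| ≤ 2 * A₁ * ρ ^ (k - l) := by
        intro l hl
        have hb := IH l hl (hl.trans hk) k hl hk
        rcases eq_or_ne (‖ε l‖ ^ 2) 0 with h0 | h0
        · simp only [ha_def]
          rw [h0, div_zero, abs_zero]
          positivity
        · have hpos : 0 < ‖ε l‖ ^ 2 := lt_of_le_of_ne (by positivity) (Ne.symm h0)
          simp only [ha_def]
          rw [abs_div, abs_of_pos hpos, div_le_iff₀ hpos]
          exact hb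
      have hsum : ∀ j, k ≤ j → j < n →
          |∑ l ∈ Finset.range k, a k l * ⟪x j, ε l⟫|
            ≤ 4 * A₁ ^ 2 * ρ ^ (j - k) * q := by
        intro j hkj hjn
        calc |∑ l ∈ Finset.range k, a k l * ⟪x j, ε l⟫|
            ≤ ∑ l ∈ Finset.range k, |a k l * ⟪x j, ε l⟫| := Finset.abs_sum_le_sum_abs _ _
          _ ≤ ∑ l ∈ Finset.range k, 4 * A₁ ^ 2 * ρ ^ (j - k) * (ρ ^ 2) ^ (k - l) := by
              refine Finset.sum_le_sum (fun l hl => ?_)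
              rw [Finset.mem_range] at hl
              rw [abs_mul]
              have h1 := haA l hl
              have h2 := IH l hl (hl.trans hk) j (lt_of_lt_of_le hl hkj) hjn
              have h2' : |⟪x j, ε l⟫| ≤ 2 * A₁ * ρ ^ (j - l) := by
                refine h2.trans ?_
                have hm := mul_le_mul_of_nonneg_left (hεle l (hl.trans hk))
                  (by positivity : (0:ℝ) ≤ 2 * A₁ * ρ ^ (j - l))
                linarith [hm]
              have h3 : |a k l| * |⟪x j, ε l⟫| ≤ 2 * A₁ * ρ ^ (k - l) * (2 * A₁ * ρ ^ (j - l)) :=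
                mul_le_mul h1 h2' (abs_nonneg _) (by positivity)
              refine h3.trans (le_of_eq ?_)
              have hee : (k - l) + (j - l) = (j - k) + (k - l) * 2 := by omega
              have heq : ρ ^ (k - l) * ρ ^ (j - l) = ρ ^ (j - k) * (ρ ^ 2) ^ (k - l) := by
                rw [← pow_add, hee, pow_add, pow_mul']
              linear_combination 4 * A₁ ^ 2 * heq
          _ = 4 * A₁ ^ 2 * ρ ^ (j - k) * ∑ l ∈ Finset.range k, (ρ ^ 2) ^ (k - l) := by
              rw [← Finset.mul_sum]
          _ ≤ 4 * A₁ ^ 2 * ρ ^ (j - k) * q :=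
              mul_le_mul_of_nonneg_left (hgeom k) (by positivity)
      have hid : ∀ j, ⟪x j, ε k⟫ = ⟪x j, x k⟫ - ∑ l ∈ Finset.range k, a k l * ⟪x j, ε l⟫ := by
        intro j
        have h1 : ⟪x j, x k - ε k⟫ = ∑ l ∈ Finset.range k, a k l * ⟪x j, ε l⟫ := by
          rw [hexp k hk, inner_sum]
          exact Finset.sum_congr rfl (fun l _ => real_inner_smul_right _ _ _)
        rw [inner_sub_right] at h1
        linarith
      have hQ : 1 - 4 * A₁ ^ 2 * q ≤ ‖ε k‖ ^ 2 := by
        have h1 := hid k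
        rw [hxε k hk] at h1
        have h2 : ⟪x k, x k⟫ = (1:ℝ) := by
          rw [real_inner_self_eq_norm_sq, hunit k hk, one_pow]
        have h3 := hsum k le_rfl hk
        rw [Nat.sub_self, pow_zero] at h3
        have h4 := abs_le.mp h3
        rw [h2] at h1
        nlinarith [h4.1, h4.2]
      have h1 := hid i
      have h2 := hcorr i hin k hk (by omega)
      have h2' : |⟪x i, x k⟫| ≤ A₁ * ρ ^ (i - k) := by
        have hnab : ((i:ℤ) - (k:ℤ)).natAbs = i - k := by omega
        rwa [hnab] at h2
      have h3 := hsum i hki.le hin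
      have habs : |⟪x i, ε k⟫|
          ≤ A₁ * ρ ^ (i - k) + 4 * A₁ ^ 2 * ρ ^ (i - k) * q := by
        rw [h1]
        refine (abs_sub _ _).trans ?_
        exact add_le_add h2' h3
      have hP : (0:ℝ) < ρ ^ (i - k) := pow_pos hρ0 _
      have hk1 := mul_le_mul_of_nonneg_right key hP.le
      have hk2 := mul_le_mul_of_nonneg_left hQ (by positivity : (0:ℝ) ≤ 2 * A₁ * ρ ^ (i - k))
      nlinarith [habs, hk1, hk2]
  -- coefficient bound
  have haA' : ∀ k j, k < j → j < n → |a j k| ≤ 2 * A₁ * ρ ^ (j - k) := by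
    intro k j hkj hjn
    have hb := hmain k (hkj.trans hjn) j hkj hjn
    rcases eq_or_ne (‖ε k‖ ^ 2) 0 with h0 | h0
    · simp only [ha_def]
      rw [h0, div_zero, abs_zero]
      positivity
    · have hpos : 0 < ‖ε k‖ ^ 2 := lt_of_le_of_ne (by positivity) (Ne.symm h0)
      simp only [ha_def]
      rw [abs_div, abs_of_pos hpos, div_le_iff₀ hpos]
      exact hb
  -- conclusion
  intro i hi i' hii'
  have hi'n : i' < n := lt_of_le_of_lt hii' hi
  have hmem' : x i' - ε i' ∈ T i := hTmono hii' (hmem i' hi'n)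
  have h1 : ⟪x i - ε i, x i' - ε i'⟫ = ⟪x i, x i' - ε i'⟫ - ⟪ε i, x i' - ε i'⟫ :=
    inner_sub_left _ _ _
  have h2 : ⟪ε i, x i' - ε i'⟫ = 0 := horth i hi _ hmem'
  have h3 : ⟪x i, x i' - ε i'⟫ = ∑ k ∈ Finset.range i', a i' k * ⟪x i, ε k⟫ := by
    rw [hexp i' hi'n, inner_sum]
    exact Finset.sum_congr rfl (fun k _ => real_inner_smul_right _ _ _)
  rw [h1, h2, sub_zero, h3]
  calc |∑ k ∈ Finset.range i', a i' k * ⟪x i, ε k⟫|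
      ≤ ∑ k ∈ Finset.range i', |a i' k * ⟪x i, ε k⟫| := Finset.abs_sum_le_sum_abs _ _
    _ ≤ ∑ k ∈ Finset.range i', 4 * A₁ ^ 2 * ρ ^ (i - i') * (ρ ^ 2) ^ (i' - k) := by
        refine Finset.sum_le_sum (fun k hk => ?_)
        rw [Finset.mem_range] at hk
        have hkn : k < n := hk.trans hi'n
        have hki : k < i := lt_of_lt_of_le hk hii'
        rw [abs_mul]
        have hA1 := haA' k i' hk hi'n
        have hA2 : |⟪x i, ε k⟫| ≤ 2 * A₁ * ρ ^ (i - k) := by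
          refine (hmain k hkn i hki hi).trans ?_
          have hm := mul_le_mul_of_nonneg_left (hεle k hkn)
            (by positivity : (0:ℝ) ≤ 2 * A₁ * ρ ^ (i - k))
          linarith [hm]
        have h4 : |a i' k| * |⟪x i, ε k⟫| ≤ 2 * A₁ * ρ ^ (i' - k) * (2 * A₁ * ρ ^ (i - k)) :=
          mul_le_mul hA1 hA2 (abs_nonneg _) (by positivity)
        refine h4.trans (le_of_eq ?_)
        have hee : (i' - k) + (i - k) = (i - i') + (i' - k) * 2 := by omega
        have heq : ρ ^ (i' - k) * ρ ^ (i - k) = ρ ^ (i - i') * (ρ ^ 2) ^ (i' - k) := by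
          rw [← pow_add, hee, pow_add, pow_mul']
        linear_combination 4 * A₁ ^ 2 * heq
    _ = 4 * A₁ ^ 2 * ρ ^ (i - i') * ∑ k ∈ Finset.range i', (ρ ^ 2) ^ (i' - k) := by
        rw [← Finset.mul_sum]
    _ ≤ 4 * A₁ ^ 2 * ρ ^ (i - i') * q :=
        mul_le_mul_of_nonneg_left (hgeom i') (by positivity)
    _ = 4 * A₁ ^ 2 * ρ ^ (i - i' + 2) / (1 - ρ ^ 2) := by
        rw [hqdef, pow_add]
        ring
end

section
/- Let Z_1,…,Z_N be i.i.d. standard Gaussian random variables, N = 2^n, S_K = Z_1 + … + Z_K, and for η ∈ (0, 1/2) define C_{n,η} = max over M ∈ [1,N] and K ∈ [0, N−M] of |S_{K+M} − S_K| / (M^{1/2} (N/M)^η). Then E[exp(C_{n,η})] ≤ C(η) for a constant C(η) depending only on η (uniformly in n). -/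
open MeasureTheory ProbabilityTheory Real Finset

/-! ### Auxiliary deterministic lemmas -/

noncomputable def blockMax (f : ℕ → ℝ) (n l : ℕ) : ℝ :=
  (Finset.range (2^(n-l))).sup' (Finset.nonempty_range_iff.2 (Nat.pow_pos two_pos).ne')
    (fun i => |f ((i+1)*2^l) - f (i*2^l)|)

lemma blockMax_nonneg (f : ℕ → ℝ) (n l : ℕ) : 0 ≤ blockMax f n l := by
  unfold blockMax
  have h0 : (0:ℕ) ∈ Finset.range (2^(n-l)) := Finset.mem_range.2 (Nat.pow_pos two_pos)
  exact le_trans (abs_nonneg _) (Finset.le_sup' (fun i => |f ((i+1)*2^l) - f (i*2^l)|) h0)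

lemma le_blockMax (f : ℕ → ℝ) {n l i : ℕ} (hl : l ≤ n) (hi : (i+1)*2^l ≤ 2^n) :
    |f ((i+1)*2^l) - f (i*2^l)| ≤ blockMax f n l := by
  unfold blockMax
  refine Finset.le_sup' (fun i => |f ((i+1)*2^l) - f (i*2^l)|) (Finset.mem_range.2 ?_)
  have h2 : (2:ℕ)^n = 2^(n-l) * 2^l := by rw [← pow_add]; congr 1; omega
  rw [h2] at hi
  have := Nat.le_of_mul_le_mul_right hi (Nat.pow_pos two_pos)
  omega

lemma telescope (f : ℕ → ℝ) (n : ℕ) : ∀ s : ℕ, s ≤ n + 1 → ∀ x : ℕ, x ≤ 2^n →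
    |f x - f (2^s * (x / 2^s))| ≤ ∑ l ∈ Finset.range s, blockMax f n l := by
  intro s
  induction s with
  | zero => intro _ x _; simp
  | succ s ih =>
    intro hs x hx
    have hsn : s ≤ n := by omega
    set q := x / 2^s with hq
    have hstep : 2^(s+1) * (x / 2^(s+1)) = 2^s * (2 * (q / 2)) := by
      rw [hq, pow_succ, Nat.div_div_eq_div_mul]
      ring
    have hqle : q ≤ 2^(n-s) := by
      rw [hq]
      calc x / 2^s ≤ 2^n / 2^s := Nat.div_le_div_right hx
        _ = 2^(n-s) := Nat.pow_div hsn two_pos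
    have htri : |f x - f (2^(s+1) * (x / 2^(s+1)))|
        ≤ |f x - f (2^s * q)| + |f (2^s * q) - f (2^(s+1) * (x / 2^(s+1)))| := by
      exact abs_sub_le _ _ _
    have hterm : |f (2^s * q) - f (2^(s+1) * (x / 2^(s+1)))| ≤ blockMax f n s := by
      rw [hstep]
      rcases Nat.even_or_odd q with ⟨c, hc⟩ | ⟨c, hc⟩
      · have : 2 * (q / 2) = q := by omega
        rw [this, sub_self, abs_zero]
        exact blockMax_nonneg f n s
      · have hq2 : q = 2 * (q / 2) + 1 := by omega
        set i := 2 * (q / 2) with hi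
        have h1 : 2^s * q = (i+1) * 2^s := by rw [hq2]; ring
        have h2 : 2^s * (2 * (q/2)) = i * 2^s := by rw [hi]; ring
        rw [h1, h2]
        refine le_blockMax f hsn ?_
        rw [← h1]
        calc 2^s * q ≤ 2^s * 2^(n-s) := Nat.mul_le_mul_left _ hqle
          _ = 2^n := by rw [← pow_add]; congr 1; omega
    calc |f x - f (2^(s+1) * (x / 2^(s+1)))|
        ≤ |f x - f (2^s * q)| + |f (2^s * q) - f (2^(s+1) * (x / 2^(s+1)))| := htri
      _ ≤ (∑ l ∈ Finset.range s, blockMax f n l) + blockMax f n s := by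
          exact add_le_add (ih (by omega) x hx) hterm
      _ = ∑ l ∈ Finset.range (s+1), blockMax f n l := (Finset.sum_range_succ _ _).symm

lemma interval_bound (f : ℕ → ℝ) (n M K : ℕ) (hM : 1 ≤ M) (hKM : K + M ≤ 2^n) :
    |f (K+M) - f K| ≤ 2 * ∑ l ∈ Finset.range (min (Nat.log 2 M + 1) n + 1), blockMax f n l := by
  set s := min (Nat.log 2 M + 1) n with hs
  have hsn : s ≤ n := min_le_right _ _
  have hM2s : M ≤ 2^s := by
    rcases min_cases (Nat.log 2 M + 1) n with ⟨h1, _⟩ | ⟨h1, h2⟩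
    · rw [hs, h1]; exact le_of_lt (Nat.lt_pow_succ_log_self one_lt_two M)
    · rw [hs, h1]; omega
  set q1 := (K + M) / 2^s with hq1
  set q2 := K / 2^s with hq2
  have hq21 : q2 ≤ q1 := Nat.div_le_div_right (by omega)
  have hq12 : q1 ≤ q2 + 1 := by
    rw [hq1, hq2]
    calc (K + M) / 2^s ≤ (K + 2^s) / 2^s := Nat.div_le_div_right (by omega)
      _ = K / 2^s + 1 := Nat.add_div_right K (Nat.pow_pos two_pos)
  have h1 : |f (K+M) - f (2^s * q1)| ≤ ∑ l ∈ Finset.range s, blockMax f n l :=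
    telescope f n s (by omega) (K+M) hKM
  have h2 : |f K - f (2^s * q2)| ≤ ∑ l ∈ Finset.range s, blockMax f n l :=
    telescope f n s (by omega) K (by omega)
  have h3 : |f (2^s * q1) - f (2^s * q2)| ≤ blockMax f n s := by
    rcases eq_or_lt_of_le hq21 with he | hlt
    · rw [he, sub_self, abs_zero]; exact blockMax_nonneg f n s
    · have hq : q1 = q2 + 1 := by omega
      have ha : 2^s * q1 = (q2+1) * 2^s := by rw [hq]; ring
      have hb : 2^s * q2 = q2 * 2^s := by ring
      rw [ha, hb]
      refine le_blockMax f hsn ?_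
      rw [← ha]
      calc 2^s * q1 = q1 * 2^s := mul_comm _ _
        _ ≤ K + M := by rw [hq1]; exact Nat.div_mul_le_self _ _
        _ ≤ 2^n := hKM
  have habs : |f (K+M) - f K| ≤ |f (K+M) - f (2^s * q1)| + |f (2^s * q1) - f (2^s * q2)|
      + |f (2^s * q2) - f K| := by
    calc |f (K+M) - f K| ≤ |f (K+M) - f (2^s * q2)| + |f (2^s * q2) - f K| := abs_sub_le _ _ _
      _ ≤ (|f (K+M) - f (2^s * q1)| + |f (2^s * q1) - f (2^s * q2)|) + |f (2^s * q2) - f K| := by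
          exact add_le_add_left (abs_sub_le _ _ _) _
  have hsum_nonneg : 0 ≤ ∑ l ∈ Finset.range s, blockMax f n l :=
    Finset.sum_nonneg fun l _ => blockMax_nonneg f n l
  calc |f (K+M) - f K| ≤ |f (K+M) - f (2^s * q1)| + |f (2^s * q1) - f (2^s * q2)|
      + |f (2^s * q2) - f K| := habs
    _ ≤ (∑ l ∈ Finset.range s, blockMax f n l) + blockMax f n s
        + (∑ l ∈ Finset.range s, blockMax f n l) := by
        refine add_le_add (add_le_add h1 h3) ?_
        rw [abs_sub_comm]; exact h2
    _ ≤ 2 * ∑ l ∈ Finset.range (s+1), blockMax f n l := by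
        rw [Finset.sum_range_succ]
        have hb := blockMax_nonneg f n s
        linarith

/-! ### Scalar rpow arithmetic -/

lemma sqrt_two_pow (l : ℕ) : Real.sqrt ((2:ℝ)^l) = (2:ℝ) ^ ((l:ℝ)/2) := by
  rw [Real.sqrt_eq_rpow, ← Real.rpow_natCast 2 l, ← Real.rpow_mul (by norm_num)]
  ring_nf

lemma coeff_bound {η : ℝ} (hη0 : 0 < η) (hη : η < 1/2) (n j l : ℕ)
    (hj : j ≤ n) (hl : l ≤ j + 1) (hln : l ≤ n) :
    2 * Real.sqrt ((2:ℝ)^l) ≤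
      4 * ((2:ℝ)^(-η))^(n-l) * (Real.sqrt ((2:ℝ)^j) * (((2:ℝ)^n / (2:ℝ)^(j+1)) ^ η)) := by
  have h2 : (0:ℝ) ≤ 2 := by norm_num
  have e1 : ((2:ℝ)^(-η))^(n-l) = (2:ℝ)^(-η * ((n:ℝ) - l)) := by
    rw [← Real.rpow_natCast ((2:ℝ)^(-η)) (n-l), ← Real.rpow_mul h2]
    congr 1
    rw [Nat.cast_sub hln]
  have e2 : ((2:ℝ)^n / (2:ℝ)^(j+1)) ^ η = (2:ℝ)^(((n:ℝ) - (j+1)) * η) := by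
    rw [show (2:ℝ)^n / (2:ℝ)^(j+1) = (2:ℝ)^((n:ℝ) - (j+1)) by
      rw [Real.rpow_sub two_pos, Real.rpow_natCast, ← Real.rpow_natCast 2 (j+1)]
      push_cast; ring_nf]
    rw [← Real.rpow_mul h2]
  rw [sqrt_two_pow, sqrt_two_pow, e1, e2]
  have hd : (0:ℝ) ≤ (j:ℝ) + 1 - l := by
    have : (l:ℝ) ≤ (j:ℝ) + 1 := by exact_mod_cast hl
    linarith
  calc 2 * (2:ℝ)^((l:ℝ)/2) = (2:ℝ)^(1 + (l:ℝ)/2) := by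
        rw [Real.rpow_add two_pos, Real.rpow_one]
    _ ≤ (2:ℝ)^(2 + (-η * ((n:ℝ) - l)) + ((j:ℝ)/2 + ((n:ℝ) - (j+1)) * η)) := by
        rw [Real.rpow_le_rpow_left_iff one_lt_two]
        nlinarith [mul_nonneg hd (by linarith : (0:ℝ) ≤ 1/2 - η)]
    _ = 4 * (2:ℝ)^(-η * ((n:ℝ) - l)) * ((2:ℝ)^((j:ℝ)/2) * (2:ℝ)^(((n:ℝ) - (j+1)) * η)) := by
        rw [Real.rpow_add two_pos, Real.rpow_add two_pos, Real.rpow_add two_pos,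
          show (2:ℝ)^(2:ℝ) = 4 by
            rw [show (2:ℝ) = ((2:ℕ):ℝ) from by norm_num, Real.rpow_natCast]; norm_num]

/-! ### Element bound -/

lemma element_bound {η : ℝ} (hη0 : 0 < η) (hη : η < 1/2) {n : ℕ} (f : ℕ → ℝ) (M K : ℕ)
    (hM : 1 ≤ M) (hKM : K + M ≤ 2^n) :
    |f (K+M) - f K| / (Real.sqrt M * (((2:ℝ)^n)/M)^η)
      ≤ ∑ l ∈ Finset.range (n+1),
          4 * ((2:ℝ)^(-η))^(n-l) * (blockMax f n l / Real.sqrt ((2:ℝ)^l)) := by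
  set j := Nat.log 2 M with hj
  have hjn : j ≤ n := by
    rw [hj, ← Nat.log_pow one_lt_two n]
    exact Nat.log_mono_right (by omega)
  set s := min (j + 1) n with hs
  have hsn : s ≤ n := min_le_right _ _
  have hMpos : (0:ℝ) < M := by exact_mod_cast hM
  have hMle : (M:ℝ) ≤ (2:ℝ)^(j+1) := by
    have := Nat.lt_pow_succ_log_self one_lt_two M
    rw [← hj] at this
    exact_mod_cast this.le
  have hMge : ((2:ℝ)^j : ℝ) ≤ (M:ℝ) := by
    have := Nat.pow_log_le_self 2 (by omega : M ≠ 0)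
    rw [← hj] at this
    exact_mod_cast this
  set den : ℝ := Real.sqrt M * (((2:ℝ)^n)/M)^η with hden
  set denj : ℝ := Real.sqrt ((2:ℝ)^j) * (((2:ℝ)^n / (2:ℝ)^(j+1)) ^ η) with hdenj
  have hdenj_pos : 0 < denj := by
    apply mul_pos (Real.sqrt_pos.2 (by positivity))
    exact Real.rpow_pos_of_pos (by positivity) _
  have hden_ge : denj ≤ den := by
    rw [hden, hdenj]
    apply mul_le_mul
    · exact Real.sqrt_le_sqrt hMge
    · apply Real.rpow_le_rpow (by positivity)
      · apply div_le_div_of_nonneg_left (by positivity) hMpos hMle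
      · exact hη0.le
    · positivity
    · exact Real.sqrt_nonneg _
  calc |f (K+M) - f K| / den
      ≤ (2 * ∑ l ∈ Finset.range (s+1), blockMax f n l) / denj := by
        apply div_le_div₀ (mul_nonneg (by norm_num)
          (Finset.sum_nonneg fun l _ => blockMax_nonneg f n l))
        · exact interval_bound f n M K hM hKM
        · exact hdenj_pos
        · exact hden_ge
    _ = ∑ l ∈ Finset.range (s+1), 2 * blockMax f n l / denj := by
        rw [Finset.mul_sum, Finset.sum_div]
    _ ≤ ∑ l ∈ Finset.range (s+1),
          4 * ((2:ℝ)^(-η))^(n-l) * (blockMax f n l / Real.sqrt ((2:ℝ)^l)) := by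
        apply Finset.sum_le_sum
        intro l hl
        have hls : l ≤ s := by
          have := Finset.mem_range.1 hl; omega
        have hσpos : (0:ℝ) < Real.sqrt ((2:ℝ)^l) := Real.sqrt_pos.2 (by positivity)
        have hcoeff := coeff_bound hη0 hη n j l hjn (by omega) (by omega)
        have hbm := blockMax_nonneg f n l
        have key : 2 * blockMax f n l / denj
            ≤ blockMax f n l * (4 * ((2:ℝ)^(-η))^(n-l)) / Real.sqrt ((2:ℝ)^l) := by
          rw [div_le_div_iff₀ hdenj_pos hσpos]
          calc 2 * blockMax f n l * Real.sqrt ((2:ℝ)^l)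
              = blockMax f n l * (2 * Real.sqrt ((2:ℝ)^l)) := by ring
            _ ≤ blockMax f n l * (4 * ((2:ℝ)^(-η))^(n-l)
                * (Real.sqrt ((2:ℝ)^j) * (((2:ℝ)^n / (2:ℝ)^(j+1)) ^ η))) :=
                mul_le_mul_of_nonneg_left hcoeff hbm
            _ = blockMax f n l * (4 * ((2:ℝ)^(-η))^(n-l)) * denj := by rw [hdenj]; ring
        exact key.trans_eq (by ring)
    _ ≤ ∑ l ∈ Finset.range (n+1),
          4 * ((2:ℝ)^(-η))^(n-l) * (blockMax f n l / Real.sqrt ((2:ℝ)^l)) := by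
        apply Finset.sum_le_sum_of_subset_of_nonneg
        · exact Finset.range_subset_range.2 (by omega)
        · intro l _ _
          have h0 : (0:ℝ) < Real.sqrt ((2:ℝ)^l) := Real.sqrt_pos.2 (by positivity)
          have h1 : (0:ℝ) ≤ ((2:ℝ)^(-η))^(n-l) := by positivity
          have h2 := blockMax_nonneg f n l
          positivity

/-! ### Gaussian moment generating function facts -/

lemma gaussPDF_mul_exp (t x : ℝ) :
    gaussianPDFReal 0 1 x * Real.exp (t * x) = Real.exp (t^2/2) * gaussianPDFReal t 1 x := by
  simp only [gaussianPDFReal, NNReal.coe_one, mul_one, sub_zero]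
  rw [mul_assoc, ← Real.exp_add, mul_comm (Real.exp (t^2/2)), mul_assoc, ← Real.exp_add]
  ring_nf

lemma integral_exp_std_gaussian (t : ℝ) :
    Integrable (fun x => Real.exp (t * x)) (gaussianReal 0 1) ∧
    ∫ x, Real.exp (t * x) ∂(gaussianReal 0 1) = Real.exp (t^2/2) := by
  have h1 : gaussianReal 0 1 = volume.withDensity (gaussianPDF 0 1) :=
    gaussianReal_of_var_ne_zero 0 one_ne_zero
  have hd : gaussianPDF 0 1 = fun x => ((gaussianPDFReal 0 1 x).toNNReal : ENNReal) := rfl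
  have hmeas : Measurable fun x => (gaussianPDFReal 0 1 x).toNNReal :=
    (measurable_gaussianPDFReal 0 1).real_toNNReal
  have hint : Integrable (fun x => (gaussianPDFReal 0 1 x).toNNReal • Real.exp (t * x)) volume := by
    have : (fun x => (gaussianPDFReal 0 1 x).toNNReal • Real.exp (t * x))
        = fun x => Real.exp (t^2/2) * gaussianPDFReal t 1 x := by
      funext x
      rw [NNReal.smul_def, smul_eq_mul, Real.coe_toNNReal _ (gaussianPDFReal_nonneg 0 1 x),
        gaussPDF_mul_exp]
    rw [this]
    exact (integrable_gaussianPDFReal t 1).const_mul _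
  constructor
  · rw [h1, hd, integrable_withDensity_iff_integrable_smul hmeas]
    exact hint
  · rw [h1, hd, integral_withDensity_eq_integral_smul hmeas]
    calc ∫ x, (gaussianPDFReal 0 1 x).toNNReal • Real.exp (t * x)
        = ∫ x, Real.exp (t^2/2) * gaussianPDFReal t 1 x := by
          congr 1; funext x
          rw [NNReal.smul_def, smul_eq_mul, Real.coe_toNNReal _ (gaussianPDFReal_nonneg 0 1 x),
            gaussPDF_mul_exp]
      _ = Real.exp (t^2/2) := by
          rw [integral_const_mul, integral_gaussianPDFReal_eq_one t one_ne_zero, mul_one]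

variable {Ω : Type} [MeasurableSpace Ω] {μ : Measure Ω} {Z : ℕ → Ω → ℝ}

lemma single_exp_int (hmeas : ∀ i, Measurable (Z i))
    (hdist : ∀ i, Measure.map (Z i) μ = gaussianReal 0 1) (i : ℕ) (t : ℝ) :
    Integrable (fun ω => Real.exp (t * Z i ω)) μ ∧ mgf (Z i) μ t = Real.exp (t^2/2) := by
  have h1 : Integrable (fun x => Real.exp (t * x)) (Measure.map (Z i) μ) := by
    rw [hdist i]; exact (integral_exp_std_gaussian t).1
  constructor
  · have := (integrable_map_measure (by
      rw [hdist i]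
      exact (measurable_const.mul measurable_id').exp.aestronglyMeasurable)
      (hmeas i).aemeasurable).mp h1
    exact this
  · have hi : ∫ x, Real.exp (t * x) ∂(Measure.map (Z i) μ) = ∫ ω, Real.exp (t * Z i ω) ∂μ :=
      integral_map (hmeas i).aemeasurable (by
        rw [hdist i]
        exact (measurable_const.mul measurable_id').exp.aestronglyMeasurable)
    have : mgf (Z i) μ t = ∫ ω, Real.exp (t * Z i ω) ∂μ := rfl
    rw [this, ← hi, hdist i]
    exact (integral_exp_std_gaussian t).2

lemma sum_exp_int [IsProbabilityMeasure μ] (hmeas : ∀ i, Measurable (Z i))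
    (hindep : iIndepFun Z μ)
    (hdist : ∀ i, Measure.map (Z i) μ = gaussianReal 0 1) (s : Finset ℕ) (t : ℝ) :
    Integrable (fun ω => Real.exp (t * ∑ i ∈ s, Z i ω)) μ ∧
    ∫ ω, Real.exp (t * ∑ i ∈ s, Z i ω) ∂μ = Real.exp (t^2 * s.card / 2) := by
  have hint : Integrable (fun ω => Real.exp (t * (∑ i ∈ s, Z i) ω)) μ :=
    hindep.integrable_exp_mul_sum hmeas (fun i _ => (single_exp_int hmeas hdist i t).1)
  have hsum : ∀ ω : Ω, (∑ i ∈ s, Z i) ω = ∑ i ∈ s, Z i ω := fun ω => Finset.sum_apply ω s Z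
  constructor
  · simpa only [hsum] using hint
  · have hm := hindep.mgf_sum hmeas s (t := t)
    have heq : mgf (∑ i ∈ s, Z i) μ t = ∫ ω, Real.exp (t * ∑ i ∈ s, Z i ω) ∂μ := by
      unfold mgf; congr 1; funext ω; simp [Finset.sum_apply]
    rw [← heq, hm]
    have : ∀ i ∈ s, mgf (Z i) μ t = Real.exp (t^2/2) :=
      fun i _ => (single_exp_int hmeas hdist i t).2
    rw [Finset.prod_congr rfl this, Finset.prod_const, ← Real.exp_nat_mul]
    ring_nf

lemma sum_exp_abs_int [IsProbabilityMeasure μ] (hmeas : ∀ i, Measurable (Z i))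
    (hindep : iIndepFun Z μ)
    (hdist : ∀ i, Measure.map (Z i) μ = gaussianReal 0 1) (s : Finset ℕ) {t : ℝ} (ht : 0 ≤ t) :
    Integrable (fun ω => Real.exp (t * |∑ i ∈ s, Z i ω|)) μ ∧
    ∫ ω, Real.exp (t * |∑ i ∈ s, Z i ω|) ∂μ ≤ 2 * Real.exp (t^2 * s.card / 2) := by
  have h1 := sum_exp_int hmeas hindep hdist s t
  have h2 := sum_exp_int hmeas hindep hdist s (-t)
  have hptwise : ∀ ω, Real.exp (t * |∑ i ∈ s, Z i ω|)
      ≤ Real.exp (t * ∑ i ∈ s, Z i ω) + Real.exp (-t * ∑ i ∈ s, Z i ω) := by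
    intro ω
    rcases abs_cases (∑ i ∈ s, Z i ω) with ⟨h, _⟩ | ⟨h, _⟩
    · rw [h]; exact le_add_of_nonneg_right (Real.exp_pos _).le
    · rw [h, mul_neg, ← neg_mul]; exact le_add_of_nonneg_left (Real.exp_pos _).le
  have hmeasS : Measurable fun ω => ∑ i ∈ s, Z i ω := Finset.measurable_sum s fun i _ => hmeas i
  have hint : Integrable (fun ω => Real.exp (t * |∑ i ∈ s, Z i ω|)) μ := by
    refine Integrable.mono' (h1.1.add h2.1) ?_ (ae_of_all _ fun ω => ?_)
    · exact ((measurable_const.mul hmeasS.abs).exp).aestronglyMeasurable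
    · rw [Real.norm_eq_abs, abs_of_pos (Real.exp_pos _)]
      exact hptwise ω
  refine ⟨hint, ?_⟩
  calc ∫ ω, Real.exp (t * |∑ i ∈ s, Z i ω|) ∂μ
      ≤ ∫ ω, (Real.exp (t * ∑ i ∈ s, Z i ω) + Real.exp (-t * ∑ i ∈ s, Z i ω)) ∂μ :=
        integral_mono hint (h1.1.add h2.1) hptwise
    _ = 2 * Real.exp (t^2 * s.card / 2) := by
        rw [integral_add h1.1 h2.1, h1.2, h2.2]; ring_nf

/-! ### Per-scale bound -/

noncomputable def Dscale (Z : ℕ → Ω → ℝ) (n l : ℕ) (ω : Ω) : ℝ :=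
  blockMax (fun K => ∑ i ∈ Finset.range K, Z i ω) n l / Real.sqrt ((2:ℝ)^l)

omit [MeasurableSpace Ω] in
lemma Dscale_nonneg (n l : ℕ) (ω : Ω) : 0 ≤ Dscale Z n l ω :=
  div_nonneg (blockMax_nonneg _ n l) (Real.sqrt_nonneg _)

lemma Dscale_measurable (hmeas : ∀ i, Measurable (Z i)) (n l : ℕ) :
    Measurable (Dscale Z n l) := by
  apply Measurable.div_const
  have : (fun ω => blockMax (fun K => ∑ i ∈ Finset.range K, Z i ω) n l)
      = (Finset.range (2^(n-l))).sup'
          (Finset.nonempty_range_iff.2 (Nat.pow_pos two_pos).ne')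
          (fun i ω => |(∑ t ∈ Finset.range ((i+1)*2^l), Z t ω)
            - ∑ t ∈ Finset.range (i*2^l), Z t ω|) := by
    funext ω
    rw [Finset.sup'_apply]
    rfl
  rw [this]
  exact Finset.measurable_sup' _ fun i _ =>
    ((Finset.measurable_sum _ fun t _ => hmeas t).sub
      (Finset.measurable_sum _ fun t _ => hmeas t)).abs

lemma scale_bound [IsProbabilityMeasure μ] (hmeas : ∀ i, Measurable (Z i))
    (hindep : iIndepFun Z μ)
    (hdist : ∀ i, Measure.map (Z i) μ = gaussianReal 0 1) (n l : ℕ)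
    {B a : ℝ} (hB : 0 < B) (ha : 0 ≤ a) :
    Integrable (fun ω => Real.exp (B * Dscale Z n l ω)) μ ∧
    ∫ ω, Real.exp (B * Dscale Z n l ω) ∂μ
      ≤ Real.exp (B*a) + 2^(n-l) * (Real.exp (B*a - (B+a)*a) * (2 * Real.exp ((B+a)^2/2))) := by
  set σ : ℝ := Real.sqrt ((2:ℝ)^l) with hσ
  have hσpos : 0 < σ := Real.sqrt_pos.2 (by positivity)
  have hσsq : σ^2 = (2:ℝ)^l := Real.sq_sqrt (by positivity)
  set τ : ℝ := (B + a) / σ with hτ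
  have hτpos : 0 < τ := div_pos (by linarith) hσpos
  set Δ : ℕ → Ω → ℝ := fun i ω => ∑ t ∈ Finset.Ico (i*2^l) ((i+1)*2^l), Z t ω with hΔ
  have hcard : ∀ i : ℕ, (Finset.Ico (i*2^l) ((i+1)*2^l)).card = 2^l := by
    intro i
    rw [Nat.card_Ico, Nat.succ_mul, Nat.add_sub_cancel_left]
  have hblock : ∀ i : ℕ, Integrable (fun ω => Real.exp (τ * |Δ i ω|)) μ ∧
      ∫ ω, Real.exp (τ * |Δ i ω|) ∂μ ≤ 2 * Real.exp ((B+a)^2/2) := by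
    intro i
    have h := sum_exp_abs_int hmeas hindep hdist (Finset.Ico (i*2^l) ((i+1)*2^l)) hτpos.le
    refine ⟨h.1, h.2.trans_eq ?_⟩
    congr 1
    rw [hcard i]
    rw [hτ, div_pow, hσsq]
    field_simp
    congr 1; push_cast; field_simp
  set RHS : Ω → ℝ := fun ω => Real.exp (B*a) + ∑ i ∈ Finset.range (2^(n-l)),
    Real.exp (B*a - (B+a)*a) * Real.exp (τ * |Δ i ω|) with hRHS
  have hptwise : ∀ ω, Real.exp (B * Dscale Z n l ω) ≤ RHS ω := by
    intro ω
    obtain ⟨i₀, hi₀mem, hi₀⟩ := Finset.exists_mem_eq_sup'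
      (Finset.nonempty_range_iff.2 (Nat.pow_pos two_pos).ne')
      (fun i => |(fun K => ∑ t ∈ Finset.range K, Z t ω) ((i+1)*2^l)
        - (fun K => ∑ t ∈ Finset.range K, Z t ω) (i*2^l)|)
    have hsub : Δ i₀ ω = (∑ t ∈ Finset.range ((i₀+1)*2^l), Z t ω)
        - ∑ t ∈ Finset.range (i₀*2^l), Z t ω :=
      Finset.sum_Ico_eq_sub _ (Nat.mul_le_mul_right _ (Nat.le_succ i₀))
    have habs : |Δ i₀ ω| = blockMax (fun K => ∑ t ∈ Finset.range K, Z t ω) n l := by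
      rw [hsub]
      unfold blockMax
      rw [hi₀]
    set x : ℝ := Dscale Z n l ω with hx
    have hxval : x = |Δ i₀ ω| / σ := by rw [hx, Dscale, ← habs, hσ]
    have hsum_nonneg : 0 ≤ ∑ i ∈ Finset.range (2^(n-l)),
        Real.exp (B*a - (B+a)*a) * Real.exp (τ * |Δ i ω|) :=
      Finset.sum_nonneg fun i _ => by positivity
    rcases le_or_gt x a with hxa | hxa
    · calc Real.exp (B * x) ≤ Real.exp (B * a) :=
            Real.exp_le_exp.2 (mul_le_mul_of_nonneg_left hxa hB.le)
        _ ≤ RHS ω := le_add_of_nonneg_right hsum_nonneg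
    · have hkey : Real.exp (B * x) ≤ Real.exp (B*a - (B+a)*a) * Real.exp (τ * |Δ i₀ ω|) := by
        rw [← Real.exp_add]
        apply Real.exp_le_exp.2
        have hτΔ : τ * |Δ i₀ ω| = (B+a) * x := by
          rw [hxval, hτ]
          field_simp
        rw [hτΔ]
        nlinarith [mul_nonneg ha (by linarith : (0:ℝ) ≤ x - a)]
      calc Real.exp (B * x) ≤ Real.exp (B*a - (B+a)*a) * Real.exp (τ * |Δ i₀ ω|) := hkey
        _ ≤ ∑ i ∈ Finset.range (2^(n-l)),
              Real.exp (B*a - (B+a)*a) * Real.exp (τ * |Δ i ω|) :=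
            Finset.single_le_sum
              (f := fun i => Real.exp (B*a - (B+a)*a) * Real.exp (τ * |Δ i ω|))
              (fun i _ => by positivity) hi₀mem
        _ ≤ RHS ω := le_add_of_nonneg_left (Real.exp_pos _).le
  have hRHSint : Integrable RHS μ := by
    apply (integrable_const _).add
    apply integrable_finset_sum
    intro i _
    exact ((hblock i).1.const_mul _)
  have hLHSint : Integrable (fun ω => Real.exp (B * Dscale Z n l ω)) μ := by
    refine Integrable.mono' hRHSint ?_ (ae_of_all _ fun ω => ?_)
    · exact (measurable_const.mul (Dscale_measurable hmeas n l)).exp.aestronglyMeasurable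
    · rw [Real.norm_eq_abs, abs_of_pos (Real.exp_pos _)]
      exact hptwise ω
  refine ⟨hLHSint, ?_⟩
  calc ∫ ω, Real.exp (B * Dscale Z n l ω) ∂μ ≤ ∫ ω, RHS ω ∂μ :=
        integral_mono hLHSint hRHSint hptwise
    _ = Real.exp (B*a) + ∑ i ∈ Finset.range (2^(n-l)),
          Real.exp (B*a - (B+a)*a) * ∫ ω, Real.exp (τ * |Δ i ω|) ∂μ := by
        rw [hRHS]
        rw [integral_add (integrable_const _) (integrable_finset_sum _ fun i _ =>
          ((hblock i).1.const_mul _))]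
        rw [integral_const]
        simp only [measure_univ, ENNReal.toReal_one, smul_eq_mul, one_mul, probReal_univ]
        congr 1
        rw [integral_finset_sum _ fun i _ => ((hblock i).1.const_mul _)]
        exact Finset.sum_congr rfl fun i _ => integral_const_mul _ _
    _ ≤ Real.exp (B*a) + 2^(n-l) * (Real.exp (B*a - (B+a)*a) * (2 * Real.exp ((B+a)^2/2))) := by
        apply add_le_add_right
        calc ∑ i ∈ Finset.range (2^(n-l)),
              Real.exp (B*a - (B+a)*a) * ∫ ω, Real.exp (τ * |Δ i ω|) ∂μ
            ≤ ∑ _i ∈ Finset.range (2^(n-l)),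
                Real.exp (B*a - (B+a)*a) * (2 * Real.exp ((B+a)^2/2)) := by
              apply Finset.sum_le_sum
              intro i _
              exact mul_le_mul_of_nonneg_left (hblock i).2 (Real.exp_pos _).le
          _ = 2^(n-l) * (Real.exp (B*a - (B+a)*a) * (2 * Real.exp ((B+a)^2/2))) := by
              rw [Finset.sum_const, Finset.card_range, nsmul_eq_mul]
              push_cast
              ring

/-! ### Numeric bounds -/

lemma geomSumLe {r : ℝ} (h0 : 0 ≤ r) (h1 : r < 1) (m : ℕ) :
    ∑ i ∈ Finset.range m, r^i ≤ 1/(1-r) := by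
  rw [geom_sum_eq (by linarith : r ≠ 1)]
  rw [show (r^m - 1)/(r-1) = (1 - r^m)/(1-r) by rw [← neg_div_neg_eq]; ring_nf]
  exact div_le_div₀ zero_le_one (by nlinarith [pow_nonneg h0 m]) (by linarith) (le_refl _)

lemma numeric_step {B : ℝ} (hB : 0 < B) (k : ℕ) :
    Real.exp (B*(2*B + Real.sqrt (2*k)))
      + 2^k * (Real.exp (B*(2*B + Real.sqrt (2*k))
          - (B+(2*B + Real.sqrt (2*k)))*(2*B + Real.sqrt (2*k)))
        * (2 * Real.exp ((B+(2*B + Real.sqrt (2*k)))^2/2)))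
    ≤ Real.exp (2*B^2 + B*Real.sqrt (2*k)) + 2*Real.exp (B^2/2) := by
  set t : ℝ := Real.sqrt (2*k) with ht
  have ht0 : 0 ≤ t := Real.sqrt_nonneg _
  have ht2 : t^2 = 2*k := Real.sq_sqrt (by positivity)
  have h1 : B*(2*B + t) = 2*B^2 + B*t := by ring
  apply add_le_add
  · rw [h1]
  · have hcollect : Real.exp (B*(2*B+t) - (B+(2*B+t))*(2*B+t)) * (2*Real.exp ((B+(2*B+t))^2/2))
        = 2 * Real.exp (B^2/2 - B*t - (k:ℝ)) := by
      rw [mul_comm, mul_assoc, ← Real.exp_add]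
      congr 2
      nlinarith [ht2]
    rw [hcollect]
    have hpow : (2:ℝ)^k ≤ Real.exp k := by
      calc (2:ℝ)^k ≤ (Real.exp 1)^k :=
            pow_le_pow_left₀ (by norm_num) (by nlinarith [Real.add_one_le_exp 1]) k
        _ = Real.exp k := by rw [← Real.exp_nat_mul]; ring_nf
    calc (2:ℝ)^k * (2 * Real.exp (B^2/2 - B*t - k))
        ≤ Real.exp k * (2 * Real.exp (B^2/2 - B*t - k)) :=
          mul_le_mul_of_nonneg_right hpow (by positivity)
      _ = 2 * Real.exp (B^2/2 - B*t) := by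
          rw [mul_comm (Real.exp (k:ℝ)), mul_assoc, ← Real.exp_add]
          ring_nf
      _ ≤ 2 * Real.exp (B^2/2) := by
          apply mul_le_mul_of_nonneg_left _ (by norm_num)
          apply Real.exp_le_exp.2
          nlinarith [mul_nonneg hB.le ht0]

lemma perk_bound {η B ε : ℝ} (hη0 : 0 < η) (hB : 0 < B) (hε : ε = η * Real.log 2 / 2) (k : ℕ) :
    ((2:ℝ)^(-η))^k * (Real.exp (2*B^2 + B*Real.sqrt (2*k)) + 2*Real.exp (B^2/2))
      ≤ Real.exp (2*B^2 + B^2/(2*ε)) * (Real.exp (-ε))^k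
        + (2*Real.exp (B^2/2)) * ((2:ℝ)^(-η))^k := by
  have hεpos : 0 < ε := by
    rw [hε]
    have := Real.log_pos one_lt_two
    positivity
  have hρ : (2:ℝ)^(-η) = Real.exp (-(2*ε)) := by
    rw [Real.rpow_def_of_pos two_pos]
    congr 1
    rw [hε]; ring
  set t : ℝ := Real.sqrt (2*k) with htdef
  have ht0 : 0 ≤ t := Real.sqrt_nonneg _
  have ht2 : t^2 = 2*k := Real.sq_sqrt (by positivity)
  have hBt : B*t ≤ ε*k + B^2/(2*ε) := by
    have h4 : (B*t - ε*k) * (2*ε) ≤ B^2 := by nlinarith [sq_nonneg (ε*t - B), sq_nonneg ε]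
    calc B*t = ε*k + (B*t - ε*k) := by ring
      _ ≤ ε*k + B^2/(2*ε) := by
          apply add_le_add_right
          rw [le_div_iff₀ (by positivity)]
          exact h4
  rw [mul_add]
  apply add_le_add
  · rw [hρ, ← Real.exp_nat_mul, ← Real.exp_nat_mul, ← Real.exp_add, ← Real.exp_add]
    apply Real.exp_le_exp.2
    linarith
  · rw [mul_comm]

/-- **Exponential moments of the discrete Hölder modulus of a Gaussian walk.** -/
lemma main_core {η ρ B ε : ℝ} (hη0 : 0 < η) (hη : η < 1/2)
    (hρdef : ρ = (2:ℝ)^(-η)) (hBdef : B = 4/(1-ρ)) (hεdef : ε = η * Real.log 2 / 2)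
    (n : ℕ) (Ω : Type) (mΩ : MeasurableSpace Ω) (μ : Measure Ω)
    (hPμ : IsProbabilityMeasure μ) (Z : ℕ → Ω → ℝ)
    (hmeas : ∀ i, Measurable (Z i))
    (hindep : iIndepFun Z μ)
    (hdist : ∀ i, Measure.map (Z i) μ = gaussianReal 0 1) :
    (∫ ω, Real.exp (sSup {r : ℝ | ∃ M K : ℕ, 1 ≤ M ∧ K + M ≤ 2 ^ n ∧
        r = |(∑ i ∈ Finset.range (K + M), Z i ω) - ∑ i ∈ Finset.range K, Z i ω| /
              (Real.sqrt M * (((2 : ℝ) ^ n) / M) ^ η)}) ∂μ)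
      ≤ Real.exp (2*B^2 + B^2/(2*ε)) * (1/(1-Real.exp (-ε)))
        + (2*Real.exp (B^2/2)) * (1/(1-ρ)) := by
  have hρpos : 0 < ρ := hρdef ▸ Real.rpow_pos_of_pos two_pos _
  have hρlt : ρ < 1 := hρdef ▸ Real.rpow_lt_one_of_one_lt_of_neg one_lt_two (by linarith)
  have hB : 0 < B := hBdef ▸ div_pos (by norm_num) (by linarith)
  have hεpos : 0 < ε := by
    rw [hεdef]
    have := Real.log_pos one_lt_two
    positivity
  have hρ'pos : 0 < Real.exp (-ε) := Real.exp_pos _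
  have hρ'lt : Real.exp (-ε) < 1 := Real.exp_lt_one_iff.2 (by linarith)
  -- weights
  have hWeq : ∑ l ∈ Finset.range (n+1), ρ^(n-l) = ∑ k ∈ Finset.range (n+1), ρ^k := by
    have h := Finset.sum_range_reflect (fun k => ρ^k) (n+1)
    simpa using h
  have hW1 : 1 ≤ ∑ l ∈ Finset.range (n+1), ρ^(n-l) := by
    calc (1:ℝ) = ρ^(n-n) := by simp
      _ ≤ ∑ l ∈ Finset.range (n+1), ρ^(n-l) :=
        Finset.single_le_sum (f := fun l => ρ^(n-l))
          (fun l _ => pow_nonneg hρpos.le _) (Finset.self_mem_range_succ n)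
  have hWpos : 0 < ∑ l ∈ Finset.range (n+1), ρ^(n-l) := lt_of_lt_of_le one_pos hW1
  have hWle : ∑ l ∈ Finset.range (n+1), ρ^(n-l) ≤ 1/(1-ρ) :=
    hWeq ▸ geomSumLe hρpos.le hρlt (n+1)
  set W : ℝ := ∑ l ∈ Finset.range (n+1), ρ^(n-l) with hWdef
  have h4W : 4*W ≤ B := by
    rw [hBdef, div_eq_mul_one_div]
    exact mul_le_mul_of_nonneg_left hWle (by norm_num)
  -- per-scale integrability and bounds
  have hscale : ∀ l : ℕ, Integrable (fun ω => Real.exp (B * Dscale Z n l ω)) μ ∧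
      ∫ ω, Real.exp (B * Dscale Z n l ω) ∂μ
        ≤ Real.exp (2*B^2 + B*Real.sqrt (2*((n-l : ℕ):ℝ))) + 2*Real.exp (B^2/2) := by
    intro l
    have h := scale_bound hmeas hindep hdist n l hB
      (a := 2*B + Real.sqrt (2*((n-l : ℕ):ℝ))) (by positivity)
    exact ⟨h.1, h.2.trans (numeric_step hB (n-l))⟩
  set g : Ω → ℝ :=
    fun ω => ∑ l ∈ Finset.range (n+1), (ρ^(n-l)/W) * Real.exp (B * Dscale Z n l ω) with hgdef
  have hgint : Integrable g μ :=
    integrable_finset_sum _ fun l _ => ((hscale l).1.const_mul _)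
  -- pointwise domination
  have hdom : ∀ ω, Real.exp (sSup {r : ℝ | ∃ M K : ℕ, 1 ≤ M ∧ K + M ≤ 2 ^ n ∧
      r = |(∑ i ∈ Finset.range (K + M), Z i ω) - ∑ i ∈ Finset.range K, Z i ω| /
            (Real.sqrt M * (((2 : ℝ) ^ n) / M) ^ η)}) ≤ g ω := by
    intro ω
    have hsup : sSup {r : ℝ | ∃ M K : ℕ, 1 ≤ M ∧ K + M ≤ 2 ^ n ∧
        r = |(∑ i ∈ Finset.range (K + M), Z i ω) - ∑ i ∈ Finset.range K, Z i ω| /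
              (Real.sqrt M * (((2 : ℝ) ^ n) / M) ^ η)}
        ≤ ∑ l ∈ Finset.range (n+1), 4*ρ^(n-l) * Dscale Z n l ω := by
      apply Real.sSup_le
      · rintro r ⟨M, K, hM, hKM, rfl⟩
        have hb := element_bound hη0 hη (fun K => ∑ i ∈ Finset.range K, Z i ω) M K hM hKM
        refine le_trans hb (le_of_eq ?_)
        apply Finset.sum_congr rfl
        intro l _
        rw [hρdef]
        rfl
      · apply Finset.sum_nonneg
        intro l _
        have h1 := Dscale_nonneg (Z := Z) n l ω
        have h2 : (0:ℝ) ≤ ρ^(n-l) := pow_nonneg hρpos.le _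
        positivity
    have hYg : Real.exp (∑ l ∈ Finset.range (n+1), 4*ρ^(n-l) * Dscale Z n l ω) ≤ g ω := by
      have hw_nonneg : ∀ l ∈ Finset.range (n+1), (0:ℝ) ≤ ρ^(n-l)/W :=
        fun l _ => div_nonneg (pow_nonneg hρpos.le _) hWpos.le
      have hw_sum : ∑ l ∈ Finset.range (n+1), ρ^(n-l)/W = 1 := by
        rw [← Finset.sum_div, ← hWdef, div_self hWpos.ne']
      have hconv := convexOn_exp.map_sum_le (t := Finset.range (n+1))
        (w := fun l => ρ^(n-l)/W) (p := fun l => 4*W*Dscale Z n l ω)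
        hw_nonneg hw_sum (fun l _ => Set.mem_univ _)
      have hYeq : ∑ l ∈ Finset.range (n+1), 4*ρ^(n-l) * Dscale Z n l ω
          = ∑ l ∈ Finset.range (n+1), (ρ^(n-l)/W) • (4*W*Dscale Z n l ω) := by
        apply Finset.sum_congr rfl
        intro l _
        rw [smul_eq_mul]
        field_simp
      rw [hYeq]
      refine hconv.trans ?_
      apply Finset.sum_le_sum
      intro l hl
      rw [smul_eq_mul]
      apply mul_le_mul_of_nonneg_left _ (hw_nonneg l hl)
      apply Real.exp_le_exp.2
      exact mul_le_mul_of_nonneg_right h4W (Dscale_nonneg n l ω)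
    exact (Real.exp_le_exp.2 hsup).trans hYg
  -- integrate
  calc (∫ ω, Real.exp (sSup {r : ℝ | ∃ M K : ℕ, 1 ≤ M ∧ K + M ≤ 2 ^ n ∧
        r = |(∑ i ∈ Finset.range (K + M), Z i ω) - ∑ i ∈ Finset.range K, Z i ω| /
              (Real.sqrt M * (((2 : ℝ) ^ n) / M) ^ η)}) ∂μ)
      ≤ ∫ ω, g ω ∂μ :=
        integral_mono_of_nonneg (ae_of_all _ fun ω => (Real.exp_pos _).le) hgint
          (ae_of_all _ hdom)
    _ = ∑ l ∈ Finset.range (n+1), (ρ^(n-l)/W) * ∫ ω, Real.exp (B * Dscale Z n l ω) ∂μ := by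
        rw [hgdef]
        rw [integral_finset_sum _ fun l _ => ((hscale l).1.const_mul _)]
        exact Finset.sum_congr rfl fun l _ => integral_const_mul _ _
    _ ≤ ∑ l ∈ Finset.range (n+1),
          ρ^(n-l) * (Real.exp (2*B^2 + B*Real.sqrt (2*((n-l:ℕ):ℝ))) + 2*Real.exp (B^2/2)) := by
        apply Finset.sum_le_sum
        intro l _
        have hI := (hscale l).2
        have hI0 : 0 ≤ ∫ ω, Real.exp (B * Dscale Z n l ω) ∂μ :=
          integral_nonneg fun ω => (Real.exp_pos _).le
        calc (ρ^(n-l)/W) * ∫ ω, Real.exp (B * Dscale Z n l ω) ∂μ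
            ≤ (ρ^(n-l)/W) * (Real.exp (2*B^2 + B*Real.sqrt (2*((n-l:ℕ):ℝ)))
                + 2*Real.exp (B^2/2)) :=
              mul_le_mul_of_nonneg_left hI (div_nonneg (pow_nonneg hρpos.le _) hWpos.le)
          _ ≤ ρ^(n-l) * (Real.exp (2*B^2 + B*Real.sqrt (2*((n-l:ℕ):ℝ)))
                + 2*Real.exp (B^2/2)) := by
              apply mul_le_mul_of_nonneg_right _ (by positivity)
              exact div_le_self (pow_nonneg hρpos.le _) hW1
    _ = ∑ k ∈ Finset.range (n+1),
          ρ^k * (Real.exp (2*B^2 + B*Real.sqrt (2*(k:ℝ))) + 2*Real.exp (B^2/2)) := by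
        have h := Finset.sum_range_reflect
          (fun k => ρ^k * (Real.exp (2*B^2 + B*Real.sqrt (2*(k:ℝ))) + 2*Real.exp (B^2/2))) (n+1)
        simpa using h
    _ ≤ ∑ k ∈ Finset.range (n+1),
          (Real.exp (2*B^2 + B^2/(2*ε)) * (Real.exp (-ε))^k
            + (2*Real.exp (B^2/2)) * ρ^k) := by
        apply Finset.sum_le_sum
        intro k _
        have := perk_bound hη0 hB hεdef k
        rw [← hρdef] at this
        exact this
    _ = Real.exp (2*B^2 + B^2/(2*ε)) * (∑ k ∈ Finset.range (n+1), (Real.exp (-ε))^k)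
        + (2*Real.exp (B^2/2)) * (∑ k ∈ Finset.range (n+1), ρ^k) := by
        rw [Finset.sum_add_distrib, Finset.mul_sum, Finset.mul_sum]
    _ ≤ Real.exp (2*B^2 + B^2/(2*ε)) * (1/(1-Real.exp (-ε)))
        + (2*Real.exp (B^2/2)) * (1/(1-ρ)) := by
        apply add_le_add
        · exact mul_le_mul_of_nonneg_left (geomSumLe hρ'pos.le hρ'lt _) (Real.exp_pos _).le
        · exact mul_le_mul_of_nonneg_left (geomSumLe hρpos.le hρlt _) (by positivity)

/-- **Exponential moments of the discrete Hölder modulus of a Gaussian walk.**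
Let `Z_1, …, Z_N` be i.i.d. standard Gaussians, `N = 2^n`, `S_K = Z_1 + ⋯ + Z_K`,
and for `η ∈ (0, 1/2)` let
`C_{n,η} = max {|S_{K+M} − S_K|/(M^{1/2}(N/M)^η) : 1 ≤ M ≤ N, 0 ≤ K ≤ N − M}`.
Then `E[exp(C_{n,η})] ≤ C(η)` for a constant depending only on `η`,
uniformly in `n`. -/
theorem gaussian_walk_holder_modulus_exp_moment (η : ℝ) (hη0 : 0 < η) (hη : η < 1 / 2) :
    ∃ C : ℝ, ∀ (n : ℕ) (Ω : Type) (_ : MeasurableSpace Ω) (μ : Measure Ω)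
      (_ : IsProbabilityMeasure μ) (Z : ℕ → Ω → ℝ),
      (∀ i, Measurable (Z i)) →
      iIndepFun Z μ →
      (∀ i, Measure.map (Z i) μ = gaussianReal 0 1) →
      (∫ ω, Real.exp (sSup {r : ℝ | ∃ M K : ℕ, 1 ≤ M ∧ K + M ≤ 2 ^ n ∧
          r = |(∑ i ∈ Finset.range (K + M), Z i ω) - ∑ i ∈ Finset.range K, Z i ω| /
                (Real.sqrt M * (((2 : ℝ) ^ n) / M) ^ η)}) ∂μ) ≤ C := by
  refine ⟨Real.exp (2*(4/(1-(2:ℝ)^(-η)))^2 + (4/(1-(2:ℝ)^(-η)))^2/(2*(η * Real.log 2 / 2)))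
      * (1/(1-Real.exp (-(η * Real.log 2 / 2))))
    + (2*Real.exp ((4/(1-(2:ℝ)^(-η)))^2/2)) * (1/(1-(2:ℝ)^(-η))), ?_⟩
  intro n Ω mΩ μ hPμ Z hmeas hindep hdist
  exact main_core hη0 hη rfl rfl rfl n Ω mΩ μ hPμ Z hmeas hindep hdist
end

section
/- Let B be a standard Brownian motion on [0,1] and, for η ∈ (0, 1/2), define the Hölder constant C_{B,η} = sup over 0 < θ < 1 and 0 ≤ t ≤ 1 − θ of |B_{t+θ} − B_t| / θ^{1/2 − η}. Then E[exp(C_{B,η})] < ∞, with a bound depending only on η. -/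
open MeasureTheory ProbabilityTheory
open Real Filter
open scoped NNReal ENNReal

/-- Complete-the-square identity for the Gaussian density. -/
lemma bhc_pdf_shift (v : ℝ≥0) (hv : v ≠ 0) (β x : ℝ) :
    gaussianPDFReal 0 v x * Real.exp (β * x)
      = Real.exp (β^2 * v / 2) * gaussianPDFReal (β * v) v x := by
  have hv' : (v:ℝ) ≠ 0 := by exact_mod_cast hv
  simp only [gaussianPDFReal]
  rw [mul_assoc, ← Real.exp_add]
  rw [show -(x-0)^2/(2*(v:ℝ)) + β*x = β^2*(v:ℝ)/2 + -(x-β*(v:ℝ))^2/(2*(v:ℝ)) from by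
    field_simp; ring]
  rw [Real.exp_add]
  ring

/-- Gaussian exponential moment of the absolute value. -/
lemma bhc_gauss_exp (v : ℝ≥0) (hv : v ≠ 0) (β : ℝ) :
    ∫⁻ x, ENNReal.ofReal (Real.exp (β * |x|)) ∂(gaussianReal 0 v) ≤
      ENNReal.ofReal (2 * Real.exp (β^2 * v / 2)) := by
  rw [gaussianReal_of_var_ne_zero 0 hv]
  rw [lintegral_withDensity_eq_lintegral_mul _ (measurable_gaussianPDF 0 v)
    (by fun_prop)]
  have key : ∀ x : ℝ, (gaussianPDF 0 v * fun x => ENNReal.ofReal (Real.exp (β * |x|))) x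
      ≤ ENNReal.ofReal (Real.exp (β^2 * v / 2)) *
        (gaussianPDF (β * v) v x + gaussianPDF (-β * v) v x) := by
    intro x
    simp only [Pi.mul_apply, gaussianPDF]
    rw [← ENNReal.ofReal_mul (gaussianPDFReal_nonneg 0 v x), mul_add,
      ← ENNReal.ofReal_mul (Real.exp_pos _).le, ← ENNReal.ofReal_mul (Real.exp_pos _).le,
      ← ENNReal.ofReal_add (mul_nonneg (Real.exp_pos _).le (gaussianPDFReal_nonneg _ v x))
        (mul_nonneg (Real.exp_pos _).le (gaussianPDFReal_nonneg _ v x))]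
    apply ENNReal.ofReal_le_ofReal
    have h1 : Real.exp (β * |x|) ≤ Real.exp (β * x) + Real.exp (-β * x) := by
      rcases abs_cases x with ⟨h, _⟩ | ⟨h, _⟩
      · rw [h]
        nlinarith [Real.exp_pos (-β * x)]
      · rw [h]
        have : β * -x = -β * x := by ring
        rw [this]
        nlinarith [Real.exp_pos (β * x)]
    calc gaussianPDFReal 0 v x * Real.exp (β * |x|)
        ≤ gaussianPDFReal 0 v x * (Real.exp (β * x) + Real.exp (-β * x)) := by
          have := gaussianPDFReal_nonneg 0 v x; nlinarith
      _ = Real.exp (β^2 * v / 2) * gaussianPDFReal (β * v) v x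
          + Real.exp (β^2 * v / 2) * gaussianPDFReal (-β * v) v x := by
          rw [mul_add, bhc_pdf_shift v hv β x]
          have h2 := bhc_pdf_shift v hv (-β) x
          rw [neg_sq] at h2
          rw [h2]
  calc ∫⁻ x, (gaussianPDF 0 v * fun x => ENNReal.ofReal (Real.exp (β * |x|))) x
      ≤ ∫⁻ x, ENNReal.ofReal (Real.exp (β^2 * v / 2)) *
        (gaussianPDF (β * v) v x + gaussianPDF (-β * v) v x) := lintegral_mono key
    _ = ENNReal.ofReal (Real.exp (β^2 * v / 2)) *
        ((∫⁻ x, gaussianPDF (β * v) v x) + ∫⁻ x, gaussianPDF (-β * v) v x) := by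
        rw [lintegral_const_mul (f := fun x => gaussianPDF (β * (v:ℝ)) v x + gaussianPDF (-β * (v:ℝ)) v x)
          _ ((measurable_gaussianPDF _ v).add (measurable_gaussianPDF _ v)),
          lintegral_add_left (measurable_gaussianPDF _ v)]
    _ = ENNReal.ofReal (2 * Real.exp (β^2 * v / 2)) := by
        rw [lintegral_gaussianPDF_eq_one _ hv, lintegral_gaussianPDF_eq_one _ hv]
        rw [ENNReal.ofReal_mul (by norm_num)]
        norm_num [mul_comm]

/-- Jensen: for a probability measure, `∫⁻ f^θ ≤ (∫⁻ f)^θ` when `0 < θ ≤ 1`. -/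
lemma bhc_jensen {Ω : Type*} [MeasurableSpace Ω] (μ : Measure Ω) [IsProbabilityMeasure μ]
    {f : Ω → ℝ≥0∞} (hf : AEMeasurable f μ) {θ : ℝ} (hθ0 : 0 < θ) (hθ1 : θ ≤ 1) :
    ∫⁻ ω, (f ω) ^ θ ∂μ ≤ (∫⁻ ω, f ω ∂μ) ^ θ := by
  rcases eq_or_lt_of_le hθ1 with h1 | h1
  · simp [h1]
  · have hpq : (1/θ).HolderConjugate (1/(1-θ)) := by
      constructor
      · rw [one_div, one_div, inv_inv, inv_inv, inv_one]; ring
      · positivity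
      · have : 0 < 1 - θ := by linarith
        positivity
    have := ENNReal.lintegral_mul_le_Lp_mul_Lq μ hpq
      (f := fun ω => (f ω) ^ θ) (g := fun _ => 1)
      (hf.pow_const θ) aemeasurable_const
    simp only [Pi.mul_apply, mul_one, ENNReal.one_rpow, lintegral_const, measure_univ,
      one_mul] at this
    calc ∫⁻ ω, (f ω) ^ θ ∂μ ≤ (∫⁻ ω, ((f ω) ^ θ) ^ (1/θ) ∂μ) ^ (1/(1/θ)) := this
      _ = (∫⁻ ω, f ω ∂μ) ^ θ := by
          rw [one_div_one_div]
          congr 1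
          refine lintegral_congr fun ω => ?_
          rw [← ENNReal.rpow_mul, mul_one_div, div_self hθ0.ne', ENNReal.rpow_one]


lemma bhc_meas_sup' {Ω ι : Type*} [MeasurableSpace Ω] (s : Finset ι) (hs : s.Nonempty)
    (f : ι → Ω → ℝ) (hf : ∀ i, Measurable (f i)) :
    Measurable (fun ω => s.sup' hs (fun i => f i ω)) := by
  induction hs using Finset.Nonempty.cons_induction with
  | singleton i => simpa using hf i
  | cons i s hi hs ih =>
    simp only [Finset.sup'_cons hs]
    exact (hf i).sup ih

/-- `((2^m)⁻¹)^p = ((2^p)⁻¹)^m` -/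
lemma bhc_pow_conv {p : ℝ} (m : ℕ) :
    (((2:ℝ)^(m:ℕ))⁻¹) ^ p = (((2:ℝ)^p)⁻¹) ^ (m:ℕ) := by
  rw [← Real.rpow_natCast (2:ℝ) m, ← Real.rpow_neg_one ((2:ℝ)^(m:ℝ)),
    ← Real.rpow_natCast (((2:ℝ)^p)⁻¹) m, ← Real.rpow_neg_one ((2:ℝ)^p),
    ← Real.rpow_mul (by norm_num), ← Real.rpow_mul (by norm_num),
    ← Real.rpow_mul (by positivity), ← Real.rpow_mul (by norm_num)]
  ring_nf

/-- Bernoulli-type: for `u ≥ 0`, `0 ≤ θ ≤ 1`: `exp (θ*u) ≤ 1 + θ*(exp u - 1)`. -/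
lemma bhc_exp_convex {u θ : ℝ} (hθ0 : 0 ≤ θ) (hθ1 : θ ≤ 1) :
    Real.exp (θ * u) ≤ 1 + θ * (Real.exp u - 1) := by
  have h := convexOn_exp.2 (Set.mem_univ u) (Set.mem_univ 0) hθ0 (by linarith : (0:ℝ) ≤ 1 - θ)
    (by ring)
  simp only [smul_eq_mul, mul_zero, add_zero, Real.exp_zero, mul_one] at h
  calc Real.exp (θ * u) ≤ θ * Real.exp u + (1 - θ) := h
    _ = 1 + θ * (Real.exp u - 1) := by ring

/-- `e^x - 1 ≤ x * e^x` for `x ≥ 0`. -/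
lemma bhc_exp_sub_one (x : ℝ) : Real.exp x - 1 ≤ x * Real.exp x := by
  have h := Real.add_one_le_exp (-x)
  have h2 := Real.exp_pos x
  have h3 : Real.exp (-x) * Real.exp x = 1 := by
    rw [← Real.exp_add]; simp
  nlinarith

/-- Dyadic increment max at level `m`. -/
noncomputable def bhcD {Ω : Type*} (W : ℝ → Ω → ℝ) (m : ℕ) (ω : Ω) : ℝ :=
  (Finset.range (2^m)).sup' (by simp [Finset.nonempty_range_iff])
    (fun k => |W (((k:ℝ)+1)/2^m) ω - W ((k:ℝ)/2^m) ω|)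

lemma bhcD_meas {Ω : Type*} [MeasurableSpace Ω] (W : ℝ → Ω → ℝ)
    (hW : ∀ t, Measurable (W t)) (m : ℕ) : Measurable (bhcD W m) := by
  apply bhc_meas_sup'
  intro k
  exact ((hW _).sub (hW _)).abs

lemma bhcD_nonneg {Ω : Type*} (W : ℝ → Ω → ℝ) (m : ℕ) (ω : Ω) : 0 ≤ bhcD W m ω := by
  obtain ⟨k, hk, he⟩ := Finset.exists_mem_eq_sup' (s := Finset.range (2^m))
    (by simp [Finset.nonempty_range_iff])
    (fun k => |W (((k:ℝ)+1)/2^m) ω - W ((k:ℝ)/2^m) ω|)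
  rw [bhcD, he]
  positivity

lemma bhcD_ge {Ω : Type*} (W : ℝ → Ω → ℝ) (m k : ℕ) (hk : k < 2^m) (ω : Ω) :
    |W (((k:ℝ)+1)/2^m) ω - W ((k:ℝ)/2^m) ω| ≤ bhcD W m ω :=
  Finset.le_sup' (fun k : ℕ => |W (((k:ℝ)+1)/2^m) ω - W ((k:ℝ)/2^m) ω|)
    (Finset.mem_range.2 hk)


noncomputable def bhcA (m : ℕ) (x : ℝ) : ℝ := (⌊x * 2^m⌋₊ : ℝ) / 2^m

lemma bhcA_le {x : ℝ} (hx : 0 ≤ x) (m : ℕ) : bhcA m x ≤ x := by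
  rw [bhcA, div_le_iff₀ (by positivity)]
  exact Nat.floor_le (by positivity)

lemma bhcA_gt {x : ℝ} (m : ℕ) : x - ((2:ℝ)^m)⁻¹ < bhcA m x := by
  have hfl := Nat.lt_floor_add_one (x*2^m)
  rw [bhcA, lt_div_iff₀ (by positivity : (0:ℝ) < 2^m)]
  have he : (x - ((2:ℝ)^m)⁻¹)*2^m = x*2^m - 1 := by field_simp
  rw [he]
  linarith

lemma bhcA_tendsto {x : ℝ} (hx : 0 ≤ x) : Tendsto (fun m => bhcA m x) atTop (nhds x) := by
  have hlow : Tendsto (fun m : ℕ => x - ((2:ℝ)^m)⁻¹) atTop (nhds x) := by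
    have h0 : Tendsto (fun m : ℕ => ((2:ℝ)^m)⁻¹) atTop (nhds 0) := by
      simpa [inv_pow] using tendsto_pow_atTop_nhds_zero_of_lt_one
        (by norm_num : (0:ℝ) ≤ 2⁻¹) (by norm_num : (2:ℝ)⁻¹ < 1)
    simpa using tendsto_const_nhds.sub h0
  exact tendsto_of_tendsto_of_tendsto_of_le_of_le hlow tendsto_const_nhds
    (fun m => (bhcA_gt m).le) (fun m => bhcA_le hx m)

lemma bhc_chaining {p : ℝ} (hp0 : 0 < p) (hp1 : p ≤ 1) {h : ℝ → ℝ}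
    (hc : Continuous h) {L : ℝ} (hL : 0 ≤ L)
    (H : ∀ m k : ℕ, k + 1 ≤ 2^m → |h (((k:ℝ)+1)/2^m) - h ((k:ℝ)/2^m)| ≤ L * (((2:ℝ)^p)⁻¹)^m)
    {θ t : ℝ} (hθ0 : 0 < θ) (hθ1 : θ < 1) (ht0 : 0 ≤ t) (ht1 : t ≤ 1 - θ) :
    |h (t+θ) - h t| ≤ (2*(1+2/(1-((2:ℝ)^p)⁻¹))) * L * θ^p := by
  set r : ℝ := ((2:ℝ)^p)⁻¹ with hr
  have h2p : (1:ℝ) < (2:ℝ)^p := Real.one_lt_rpow_iff_of_pos (by norm_num) |>.2 (Or.inl ⟨by norm_num, hp0⟩)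
  have hr0 : 0 < r := by positivity
  have hr1 : r < 1 := by rw [hr]; exact inv_lt_one_of_one_lt₀ h2p
  have h1r : (0:ℝ) < 1 - r := by linarith
  -- step estimate between consecutive dyadic approximations
  have hstep : ∀ x : ℝ, 0 ≤ x → x ≤ 1 → ∀ m : ℕ,
      |h (bhcA (m+1) x) - h (bhcA m x)| ≤ L * r^(m+1) := by
    intro x hx0 hx1 m
    set k₀ := ⌊x*2^m⌋₊ with hk₀
    set k₁ := ⌊x*2^(m+1)⌋₊ with hk₁
    have hmul : x*2^(m+1) = 2*(x*2^m) := by ring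
    have hlow : 2*k₀ ≤ k₁ := by
      apply Nat.le_floor
      push_cast
      rw [hmul]
      have := Nat.floor_le (a := x*2^m) (by positivity)
      linarith
    have hup : k₁ < 2*k₀ + 2 := by
      have h2 : x*2^(m+1) < 2*(k₀:ℝ) + 2 := by
        rw [hmul]
        have := Nat.lt_floor_add_one (x*2^m)
        linarith
      rw [hk₁]
      apply (Nat.floor_lt (by positivity)).2
      push_cast
      linarith
    have hcases : k₁ = 2*k₀ ∨ k₁ = 2*k₀+1 := by omega
    rcases hcases with hcase | hcase
    · have : bhcA (m+1) x = bhcA m x := by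
        rw [bhcA, bhcA, ← hk₁, ← hk₀, hcase]
        push_cast
        field_simp
        ring
      rw [this, sub_self, abs_zero]
      positivity
    · have hk1le : k₁ ≤ 2^(m+1) := by
        have hb : x * 2^(m+1) ≤ ((2^(m+1) : ℕ) : ℝ) := by
          push_cast
          nlinarith [pow_pos (by norm_num : (0:ℝ) < 2) (m+1)]
        calc k₁ ≤ ⌊((2^(m+1):ℕ):ℝ)⌋₊ := Nat.floor_mono hb
          _ = 2^(m+1) := Nat.floor_natCast _
      have happ := H (m+1) (2*k₀) (by omega)
      have e1 : bhcA (m+1) x = (((2*k₀:ℕ):ℝ)+1)/2^(m+1) := by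
        rw [bhcA, ← hk₁, hcase]; push_cast; ring
      have e2 : bhcA m x = ((2*k₀:ℕ):ℝ)/2^(m+1) := by
        rw [bhcA, ← hk₀]; push_cast; field_simp; ring
      rw [e1, e2]
      exact happ
  -- tail estimate
  have htail : ∀ x : ℝ, 0 ≤ x → x ≤ 1 → ∀ n : ℕ,
      |h x - h (bhcA n x)| ≤ L * r^(n+1) / (1-r) := by
    intro x hx0 hx1 n
    have hM : ∀ j : ℕ, |h (bhcA (n+j) x) - h (bhcA n x)|
        ≤ L * r^(n+1) * ∑ i ∈ Finset.range j, r^i := by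
      intro j
      induction j with
      | zero => simp
      | succ j ih =>
        have h1 := hstep x hx0 hx1 (n+j)
        have hpow : r^(n+j+1) = r^(n+1) * r^j := by
          rw [← pow_add]
          ring_nf
        calc |h (bhcA (n+(j+1)) x) - h (bhcA n x)|
            ≤ |h (bhcA (n+j+1) x) - h (bhcA (n+j) x)| + |h (bhcA (n+j) x) - h (bhcA n x)| := by
              rw [show n+(j+1) = n+j+1 from rfl]
              exact abs_sub_le _ _ _
          _ ≤ L * r^(n+j+1) + L * r^(n+1) * ∑ i ∈ Finset.range j, r^i := add_le_add h1 ih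
          _ = L * r^(n+1) * ∑ i ∈ Finset.range (j+1), r^i := by
              rw [Finset.sum_range_succ, hpow]; ring
    have hsum : ∀ j : ℕ, ∑ i ∈ Finset.range j, r^i ≤ (1-r)⁻¹ := by
      intro j
      have hg := geom_sum_mul r j
      rw [inv_eq_one_div, le_div_iff₀ h1r]
      nlinarith [pow_nonneg hr0.le j]
    have hadd : Tendsto (fun j : ℕ => n + j) atTop atTop := by
      simpa [Nat.add_comm] using tendsto_add_atTop_nat n
    have hsub2 : Tendsto (fun j : ℕ => bhcA (n+j) x) atTop (nhds x) :=
      (bhcA_tendsto hx0).comp hadd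
    have hconv : Tendsto (fun j => h (bhcA (n+j) x)) atTop (nhds (h x)) :=
      (hc.tendsto x).comp hsub2
    have habs : Tendsto (fun j => |h (bhcA (n+j) x) - h (bhcA n x)|) atTop
        (nhds (|h x - h (bhcA n x)|)) := (hconv.sub tendsto_const_nhds).abs
    apply le_of_tendsto habs
    filter_upwards with j
    calc |h (bhcA (n+j) x) - h (bhcA n x)| ≤ L * r^(n+1) * ∑ i ∈ Finset.range j, r^i := hM j
      _ ≤ L * r^(n+1) * (1-r)⁻¹ := by
          apply mul_le_mul_of_nonneg_left (hsum j) (by positivity)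
      _ = L * r^(n+1) / (1-r) := by rw [div_eq_mul_inv]
  -- middle estimate at matched level
  have hmid : ∀ n : ℕ, θ < ((2:ℝ)^n)⁻¹ → |h (bhcA n (t+θ)) - h (bhcA n t)| ≤ L * r^n := by
    intro n hn
    set k₀ := ⌊t*2^n⌋₊ with hk₀
    set k₁ := ⌊(t+θ)*2^n⌋₊ with hk₁
    have h2n : (0:ℝ) < 2^n := by positivity
    have hk01 : k₀ ≤ k₁ := Nat.floor_mono (by nlinarith)
    have hθn : θ * 2^n < 1 := by
      have := mul_lt_mul_of_pos_right hn h2n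
      rwa [inv_mul_cancel₀ (ne_of_gt h2n)] at this
    have hk1up : k₁ < k₀ + 2 := by
      rw [hk₁]
      apply (Nat.floor_lt (by positivity)).2
      push_cast
      have := Nat.lt_floor_add_one (t*2^n)
      nlinarith
    have hcases : k₁ = k₀ ∨ k₁ = k₀+1 := by omega
    rcases hcases with hcase | hcase
    · have : bhcA n (t+θ) = bhcA n t := by rw [bhcA, bhcA, ← hk₁, ← hk₀, hcase]
      rw [this, sub_self, abs_zero]
      positivity
    · have hk1le : k₁ ≤ 2^n := by
        have hb : (t+θ) * 2^n ≤ ((2^n : ℕ) : ℝ) := by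
          push_cast
          nlinarith
        calc k₁ ≤ ⌊((2^n:ℕ):ℝ)⌋₊ := Nat.floor_mono hb
          _ = 2^n := Nat.floor_natCast _
      have happ := H n k₀ (by omega)
      have e1 : bhcA n (t+θ) = ((k₀:ℝ)+1)/2^n := by rw [bhcA, ← hk₁, hcase]; push_cast; ring
      have e2 : bhcA n t = (k₀:ℝ)/2^n := rfl
      rw [e1, e2]
      exact happ
  -- choice of the level n₀
  have hex : ∃ n : ℕ, ((2:ℝ)^(n+1))⁻¹ ≤ θ := by
    obtain ⟨n, hn⟩ := exists_pow_lt_of_lt_one hθ0 (by norm_num : (2:ℝ)⁻¹ < 1)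
    refine ⟨n, ?_⟩
    have hp1' : (0:ℝ) < 2^(n+1) := by positivity
    have hpn : (0:ℝ) < 2^n := by positivity
    have h1 : ((2:ℝ)^(n+1))⁻¹ ≤ ((2:ℝ)^n)⁻¹ := by
      apply inv_anti₀ hpn
      rw [pow_succ]
      nlinarith
    rw [inv_pow] at hn
    exact le_trans h1 (le_of_lt hn)
  set S : Set ℕ := {n : ℕ | ((2:ℝ)^(n+1))⁻¹ ≤ θ} with hS
  have hSne : S.Nonempty := hex
  set n₀ := sInf S with hn₀
  have hge : ((2:ℝ)^(n₀+1))⁻¹ ≤ θ := Nat.sInf_mem hSne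
  have hlt : θ < ((2:ℝ)^n₀)⁻¹ := by
    rcases Nat.eq_zero_or_pos n₀ with h0 | hpos
    · rw [h0]; simpa using hθ1
    · by_contra hcon
      push_neg at hcon
      have : n₀ - 1 ∈ S := by
        simp only [hS, Set.mem_setOf_eq]
        rwa [Nat.sub_add_cancel hpos]
      have := Nat.sInf_le this
      omega
  -- assemble
  have htθ0 : (0:ℝ) ≤ t + θ := by linarith
  have htθ1 : t + θ ≤ 1 := by linarith
  have ht1' : t ≤ 1 := by linarith
  have hA := htail (t+θ) htθ0 htθ1 n₀
  have hB := hmid n₀ hlt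
  have hC := htail t ht0 ht1' n₀
  have htri : |h (t+θ) - h t| ≤ |h (t+θ) - h (bhcA n₀ (t+θ))|
      + |h (bhcA n₀ (t+θ)) - h (bhcA n₀ t)| + |h (bhcA n₀ t) - h t| := by
    have := abs_sub_le (h (t+θ)) (h (bhcA n₀ (t+θ))) (h t)
    have := abs_sub_le (h (bhcA n₀ (t+θ))) (h (bhcA n₀ t)) (h t)
    calc |h (t+θ) - h t| ≤ |h (t+θ) - h (bhcA n₀ (t+θ))| + |h (bhcA n₀ (t+θ)) - h t| :=
          abs_sub_le _ _ _
      _ ≤ _ := by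
          have := abs_sub_le (h (bhcA n₀ (t+θ))) (h (bhcA n₀ t)) (h t)
          linarith
    
  have hCflip : |h (bhcA n₀ t) - h t| ≤ L * r^(n₀+1) / (1-r) := by
    rw [abs_sub_comm]; exact hC
  -- convert powers of r to powers of θ
  have hrθ : r^(n₀+1) ≤ θ^p := by
    have : (((2:ℝ)^(n₀+1))⁻¹) ^ p ≤ θ^p :=
      Real.rpow_le_rpow (by positivity) hge hp0.le
    calc r^(n₀+1) = (((2:ℝ)^(n₀+1))⁻¹) ^ p := by
          rw [bhc_pow_conv]
      _ ≤ θ^p := this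
  have hrn : r^n₀ = r^(n₀+1) * (2:ℝ)^p := by
    rw [pow_succ, mul_assoc, hr, inv_mul_cancel₀ (by positivity), mul_one]
  have h2p2 : (2:ℝ)^p ≤ 2 := by
    calc (2:ℝ)^p ≤ (2:ℝ)^(1:ℝ) := Real.rpow_le_rpow_of_exponent_le (by norm_num) hp1
      _ = 2 := Real.rpow_one 2
  have hθp0 : (0:ℝ) ≤ θ^p := Real.rpow_nonneg hθ0.le p
  have hr2 : (0:ℝ) ≤ L * r^(n₀+1) := by positivity
  calc |h (t+θ) - h t| ≤ L * r^(n₀+1) / (1-r) + L * r^n₀ + L * r^(n₀+1) / (1-r) := by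
        linarith
    _ = L * r^(n₀+1) * (2^p + 2/(1-r)) := by
        rw [hrn]; field_simp; ring
    _ ≤ L * θ^p * (2 + 2*(2/(1-r))) := by
        have hf : (2:ℝ)^p + 2/(1-r) ≤ 2 + 2*(2/(1-r)) := by
          have h1p : (1:ℝ) ≤ (2:ℝ)^p := h2p.le
          have : (0:ℝ) ≤ 2/(1-r) := by positivity
          linarith
        have h2 : L * r^(n₀+1) ≤ L * θ^p := mul_le_mul_of_nonneg_left hrθ hL
        have h3 : (0:ℝ) ≤ 2 + 2*(2/(1-r)) := by positivity
        nlinarith [mul_le_mul_of_nonneg_right h2 h3, mul_le_mul_of_nonneg_left hf hr2]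
    _ = (2*(1+2/(1-r))) * L * θ^p := by ring





lemma bhc_level {Ω : Type*} [MeasurableSpace Ω] (μ : Measure Ω) [IsProbabilityMeasure μ]
    (W : ℝ → Ω → ℝ) (hmeas : ∀ t, Measurable (W t))
    (hgauss : ∀ s t : ℝ, 0 ≤ s → s ≤ t →
      Measure.map (fun ω => W t ω - W s ω) μ = gaussianReal 0 (t - s).toNNReal)
    (m : ℕ) (β : ℝ) :
    ∫⁻ ω, ENNReal.ofReal (Real.exp (β * bhcD W m ω)) ∂μ ≤
      ENNReal.ofReal ((2:ℝ)^m * (2 * Real.exp (β^2 * ((2:ℝ)^m)⁻¹ / 2))) := by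
  have hgm : Measurable fun x : ℝ => ENNReal.ofReal (Real.exp (β * |x|)) :=
    ((measurable_abs.const_mul β).exp).ennreal_ofReal
  have hstep : ∀ ω, ENNReal.ofReal (Real.exp (β * bhcD W m ω)) ≤
      ∑ k ∈ Finset.range (2^m),
        ENNReal.ofReal (Real.exp (β * |W (((k:ℝ)+1)/2^m) ω - W ((k:ℝ)/2^m) ω|)) := by
    intro ω
    obtain ⟨k, hk, he⟩ := Finset.exists_mem_eq_sup' (s := Finset.range (2^m))
      (by simp [Finset.nonempty_range_iff])
      (fun k : ℕ => |W (((k:ℝ)+1)/2^m) ω - W ((k:ℝ)/2^m) ω|)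
    have hD : bhcD W m ω = |W (((k:ℝ)+1)/2^m) ω - W ((k:ℝ)/2^m) ω| := he
    rw [hD]
    exact Finset.single_le_sum
      (f := fun k : ℕ => ENNReal.ofReal (Real.exp (β * |W (((k:ℝ)+1)/2^m) ω - W ((k:ℝ)/2^m) ω|)))
      (fun _ _ => zero_le) hk
  calc ∫⁻ ω, ENNReal.ofReal (Real.exp (β * bhcD W m ω)) ∂μ
      ≤ ∫⁻ ω, ∑ k ∈ Finset.range (2^m),
          ENNReal.ofReal (Real.exp (β * |W (((k:ℝ)+1)/2^m) ω - W ((k:ℝ)/2^m) ω|)) ∂μ :=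
        lintegral_mono hstep
    _ = ∑ k ∈ Finset.range (2^m), ∫⁻ ω,
          ENNReal.ofReal (Real.exp (β * |W (((k:ℝ)+1)/2^m) ω - W ((k:ℝ)/2^m) ω|)) ∂μ := by
        apply lintegral_finset_sum
        intro k _
        exact hgm.comp ((hmeas _).sub (hmeas _))
    _ ≤ ∑ _k ∈ Finset.range (2^m),
          ENNReal.ofReal (2 * Real.exp (β^2 * ((2:ℝ)^m)⁻¹ / 2)) := by
        apply Finset.sum_le_sum
        intro k _
        have hs0 : (0:ℝ) ≤ (k:ℝ)/2^m := by positivity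
        have hst : ((k:ℝ))/2^m ≤ ((k:ℝ)+1)/2^m := by
          gcongr
          linarith
        have hmap := hgauss ((k:ℝ)/2^m) (((k:ℝ)+1)/2^m) hs0 hst
        have hdiff : ((k:ℝ)+1)/2^m - (k:ℝ)/2^m = ((2:ℝ)^m)⁻¹ := by
          field_simp
          ring
        rw [hdiff] at hmap
        have hv : (((2:ℝ)^m)⁻¹.toNNReal) ≠ 0 := by
          refine (Real.toNNReal_pos.2 (by positivity)).ne'
        have hcv : ((((2:ℝ)^m)⁻¹.toNNReal : ℝ≥0) : ℝ) = ((2:ℝ)^m)⁻¹ :=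
          Real.coe_toNNReal _ (by positivity)
        calc ∫⁻ ω, ENNReal.ofReal (Real.exp (β * |W (((k:ℝ)+1)/2^m) ω - W ((k:ℝ)/2^m) ω|)) ∂μ
            = ∫⁻ x, ENNReal.ofReal (Real.exp (β * |x|))
                ∂(Measure.map (fun ω => W (((k:ℝ)+1)/2^m) ω - W ((k:ℝ)/2^m) ω) μ) :=
              (lintegral_map hgm ((hmeas _).sub (hmeas _))).symm
          _ = ∫⁻ x, ENNReal.ofReal (Real.exp (β * |x|))
                ∂(gaussianReal 0 (((2:ℝ)^m)⁻¹.toNNReal)) := by rw [hmap]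
          _ ≤ ENNReal.ofReal (2 * Real.exp (β^2 * (((2:ℝ)^m)⁻¹.toNNReal : ℝ) / 2)) :=
              bhc_gauss_exp _ hv β
          _ = ENNReal.ofReal (2 * Real.exp (β^2 * ((2:ℝ)^m)⁻¹ / 2)) := by rw [hcv]
    _ = ENNReal.ofReal ((2:ℝ)^m * (2 * Real.exp (β^2 * ((2:ℝ)^m)⁻¹ / 2))) := by
        rw [Finset.sum_const, Finset.card_range, nsmul_eq_mul]
        rw [← ENNReal.ofReal_natCast (2^m), ← ENNReal.ofReal_mul (by positivity)]
        norm_num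


/-- A standard one-dimensional Brownian motion (indexed by `t ≥ 0`). -/
structure IsStdBM {Ω : Type*} [MeasurableSpace Ω] (μ : Measure Ω)
    (W : ℝ → Ω → ℝ) : Prop where
  meas : ∀ t, Measurable (W t)
  start : ∀ᵐ ω ∂μ, W 0 ω = 0
  cont : ∀ᵐ ω ∂μ, Continuous fun t => W t ω
  gauss : ∀ s t : ℝ, 0 ≤ s → s ≤ t →
    Measure.map (fun ω => W t ω - W s ω) μ = gaussianReal 0 (t - s).toNNReal
  indep : ∀ (n : ℕ) (ts : Fin (n + 1) → ℝ), (∀ i, 0 ≤ ts i) → Monotone ts →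
    iIndepFun
      (fun i : Fin n => fun ω => W (ts i.succ) ω - W (ts i.castSucc) ω) μ

set_option maxHeartbeats 2000000 in
/-- **Exponential moments of the Brownian Hölder constant.**
For `η ∈ (0, 1/2)`, let
`C_{B,η}(ω) = sup {|B_{t+θ}(ω) − B_t(ω)|/θ^{1/2−η} : 0 < θ < 1, 0 ≤ t ≤ 1−θ}`.
Then `E[exp(C_{B,η})]` is finite, with a bound depending only on `η`. -/
theorem brownian_holder_constant_exp_moment (η : ℝ) (hη0 : 0 < η) (hη : η < 1 / 2) :
    ∃ C : ℝ, ∀ (Ω : Type) (_ : MeasurableSpace Ω) (μ : Measure Ω)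
      (_ : IsProbabilityMeasure μ) (W : ℝ → Ω → ℝ), IsStdBM μ W →
      (∫ ω, Real.exp (sSup {r : ℝ | ∃ θ t : ℝ, 0 < θ ∧ θ < 1 ∧ 0 ≤ t ∧ t ≤ 1 - θ ∧
          r = |W (t + θ) ω - W t ω| / θ ^ ((1 : ℝ) / 2 - η)}) ∂μ) ≤ C := by
  -- basic constants
  set p : ℝ := 1/2 - η with hp
  have hp0 : 0 < p := by rw [hp]; linarith
  have hp1 : p ≤ 1 := by rw [hp]; linarith
  set r : ℝ := ((2:ℝ)^p)⁻¹ with hrdef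
  have h2p : (1:ℝ) < (2:ℝ)^p :=
    Real.one_lt_rpow_iff_of_pos (by norm_num) |>.2 (Or.inl ⟨by norm_num, hp0⟩)
  have hr0 : 0 < r := by positivity
  have hr1 : r < 1 := inv_lt_one_of_one_lt₀ h2p
  have h1r : (0:ℝ) < 1 - r := by linarith
  set c : ℝ := 2*(1+2/(1-r)) with hcdef
  have hc0 : 0 < c := by positivity
  set u : ℝ := (2:ℝ)^(η:ℝ) with hudef
  have hu1 : (1:ℝ) < u :=
    Real.one_lt_rpow_iff_of_pos (by norm_num) |>.2 (Or.inl ⟨by norm_num, hη0⟩)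
  have hu0 : (0:ℝ) < u := by positivity
  set q : ℝ := u⁻¹ with hqdef
  have hq0 : 0 < q := by positivity
  have hq1 : q < 1 := inv_lt_one_of_one_lt₀ hu1
  have hlog2 : (0:ℝ) < Real.log 2 := Real.log_pos (by norm_num)
  set M : ℝ := Real.log 2 + 1/η + c^2/2 with hMdef
  set Bm : ℕ → ℝ := fun m => Real.exp M * (((m:ℝ)+1)*Real.log 2 + c^2/2) * q^m with hBmdef
  have hBm0 : ∀ m, 0 ≤ Bm m := by
    intro m
    rw [hBmdef]
    have : (0:ℝ) ≤ ((m:ℝ)+1)*Real.log 2 + c^2/2 := by positivity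
    positivity
  have hBsum : Summable Bm := by
    have h1 : Summable (fun m : ℕ => ((m:ℝ))^1 * q^m) :=
      summable_pow_mul_geometric_of_norm_lt_one 1 (by rw [Real.norm_eq_abs, abs_of_pos hq0]; exact hq1)
    have h2 : Summable (fun m : ℕ => q^m) := summable_geometric_of_lt_one hq0.le hq1
    have h3 : Summable (fun m : ℕ => ((m:ℝ)+1)*Real.log 2 * q^m + c^2/2 * q^m) := by
      apply Summable.add
      · have : Summable (fun m : ℕ => Real.log 2 * ((m:ℝ)^1 * q^m) + Real.log 2 * q^m) :=
          (h1.mul_left _).add (h2.mul_left _)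
        apply this.congr
        intro m
        ring
      · exact h2.mul_left _
    apply (h3.mul_left (Real.exp M)).congr
    intro m
    rw [hBmdef]
    ring
  refine ⟨1 + ∑' m, Bm m, ?_⟩
  intro Ω inst μ instP W hW
  have htsum0 : 0 ≤ ∑' m, Bm m := tsum_nonneg hBm0
  have hC0 : (0:ℝ) ≤ 1 + ∑' m, Bm m := by linarith
  -- the scaled dyadic maxima
  set Km : ℕ → Ω → ℝ := fun m ω => bhcD W m ω / r^m with hKmdef
  have hKm0 : ∀ m ω, 0 ≤ Km m ω := fun m ω => by
    rw [hKmdef]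
    exact div_nonneg (bhcD_nonneg W m ω) (by positivity)
  have hKmmeas : ∀ m, Measurable (Km m) := fun m =>
    (bhcD_meas W hW.meas m).div_const _
  set g : ℕ → Ω → ℝ≥0∞ := fun m ω => ENNReal.ofReal (Real.exp (c * Km m ω) - 1) with hgdef
  have hgmeas : ∀ m, Measurable (g m) := fun m =>
    (((hKmmeas m).const_mul c).exp.sub measurable_const).ennreal_ofReal
  -- pointwise a.e. bound via chaining
  have hptwise : ∀ᵐ ω ∂μ, ENNReal.ofReal (Real.exp (sSup {r : ℝ | ∃ θ t : ℝ,
      0 < θ ∧ θ < 1 ∧ 0 ≤ t ∧ t ≤ 1 - θ ∧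
      r = |W (t + θ) ω - W t ω| / θ ^ ((1 : ℝ) / 2 - η)})) ≤ 1 + ∑' m, g m ω := by
    filter_upwards [hW.cont] with ω hcont
    by_cases hT : (∑' m, g m ω) = ∞
    · rw [hT]
      simp
    · set T := ∑' m, g m ω with hTdef
      have hTr : ∀ m, Real.exp (c * Km m ω) - 1 ≤ T.toReal := by
        intro m
        have h1 : g m ω ≤ T := ENNReal.le_tsum m
        exact (ENNReal.ofReal_le_iff_le_toReal hT).1 h1
      have hpos : (0:ℝ) < 1 + T.toReal := by
        have := ENNReal.toReal_nonneg (a := T)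
        linarith
      set L' : ℝ := Real.log (1 + T.toReal) / c with hL'def
      have hL'0 : 0 ≤ L' := by
        apply div_nonneg _ hc0.le
        apply Real.log_nonneg
        have := ENNReal.toReal_nonneg (a := T)
        linarith
      have hKmL : ∀ m, Km m ω ≤ L' := by
        intro m
        have h2 : Real.exp (c * Km m ω) ≤ 1 + T.toReal := by linarith [hTr m]
        have h3 : c * Km m ω ≤ Real.log (1 + T.toReal) :=
          (Real.le_log_iff_exp_le hpos).2 h2
        rw [hL'def, le_div_iff₀ hc0]
        linarith [h3]
      have hH : ∀ m k : ℕ, k + 1 ≤ 2^m →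
          |W (((k:ℝ)+1)/2^m) ω - W ((k:ℝ)/2^m) ω| ≤ L' * r^m := by
        intro m k hk
        have h1 := bhcD_ge W m k (by omega) ω
        have h2 : bhcD W m ω = Km m ω * r^m := by
          rw [hKmdef]
          field_simp
        calc |W (((k:ℝ)+1)/2^m) ω - W ((k:ℝ)/2^m) ω| ≤ bhcD W m ω := h1
          _ = Km m ω * r^m := h2
          _ ≤ L' * r^m := by
              apply mul_le_mul_of_nonneg_right (hKmL m) (by positivity)
      have hsup : sSup {r : ℝ | ∃ θ t : ℝ, 0 < θ ∧ θ < 1 ∧ 0 ≤ t ∧ t ≤ 1 - θ ∧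
          r = |W (t + θ) ω - W t ω| / θ ^ ((1 : ℝ) / 2 - η)} ≤ c * L' := by
        apply Real.sSup_le _ (by positivity)
        rintro x ⟨θ, t, hθ0, hθ1, ht0, ht1, rfl⟩
        have hch := bhc_chaining hp0 hp1 (h := fun s => W s ω) hcont hL'0 hH hθ0 hθ1 ht0 ht1
        have hθp : (0:ℝ) < θ ^ ((1:ℝ)/2 - η) := Real.rpow_pos_of_pos hθ0 _
        rw [div_le_iff₀ hθp]
        calc |W (t + θ) ω - W t ω| ≤ (2*(1+2/(1-r))) * L' * θ^p := hch
          _ = c * L' * θ ^ ((1:ℝ)/2 - η) := by rw [hcdef, hp]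
      calc ENNReal.ofReal (Real.exp (sSup _)) ≤ ENNReal.ofReal (Real.exp (c * L')) := by
            apply ENNReal.ofReal_le_ofReal
            exact Real.exp_le_exp.2 hsup
        _ = ENNReal.ofReal (1 + T.toReal) := by
            rw [hL'def, mul_div_cancel₀ _ hc0.ne', Real.exp_log hpos]
        _ = 1 + T := by
            rw [ENNReal.ofReal_add (by norm_num) ENNReal.toReal_nonneg,
              ENNReal.ofReal_one, ENNReal.ofReal_toReal hT]
  -- per-level moment bound
  have hlevel : ∀ m : ℕ, ∫⁻ ω, g m ω ∂μ ≤ ENNReal.ofReal (Bm m) := by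
    intro m
    set θm : ℝ := q^m with hθmdef
    have hθm0 : 0 < θm := by positivity
    have hθm1 : θm ≤ 1 := pow_le_one₀ hq0.le hq1.le
    set βm : ℝ := c * (u/r)^m with hβmdef
    have hur2 : ((u/r)^2 : ℝ) = 2 := by
      rw [hudef, hrdef, div_eq_mul_inv, inv_inv, ← Real.rpow_add (by norm_num)]
      rw [← Real.rpow_natCast ((2:ℝ)^(η+p)) 2, ← Real.rpow_mul (by norm_num)]
      rw [hp]
      norm_num
    have hβsq : βm^2 * ((2:ℝ)^m)⁻¹ = c^2 := by
      have h1 : βm^2 = c^2 * ((u/r)^2)^m := by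
        rw [hβmdef]
        rw [mul_pow, ← pow_mul, ← pow_mul, Nat.mul_comm]
      rw [h1, hur2]
      field_simp
    have hexp_eq : ∀ ω, Real.exp (c * Km m ω) = (Real.exp (βm * bhcD W m ω)) ^ θm := by
      intro ω
      rw [← Real.exp_mul]
      congr 1
      rw [hKmdef, hβmdef, hθmdef, hqdef, div_pow]
      have hu0' : u^m ≠ 0 := by positivity
      have hr0' : r^m ≠ 0 := by positivity
      field_simp
      rw [one_div, inv_pow, mul_assoc, mul_inv_cancel₀ hu0', mul_one]
    have hlev := bhc_level μ W hW.meas hW.gauss m βm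
    rw [show βm^2 * ((2:ℝ)^m)⁻¹ / 2 = c^2/2 by rw [hβsq]] at hlev
    set am : ℝ := (2:ℝ)^m * (2 * Real.exp (c^2/2)) with hamdef
    have ham1 : (1:ℝ) ≤ am := by
      rw [hamdef]
      have h1 : (1:ℝ) ≤ (2:ℝ)^m := one_le_pow₀ (by norm_num)
      nlinarith [Real.one_le_exp (by positivity : (0:ℝ) ≤ c^2/2)]
    have key1 : ∫⁻ ω, ENNReal.ofReal (Real.exp (c * Km m ω)) ∂μ ≤
        ENNReal.ofReal (am ^ θm) := by
      calc ∫⁻ ω, ENNReal.ofReal (Real.exp (c * Km m ω)) ∂μ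
          = ∫⁻ ω, (ENNReal.ofReal (Real.exp (βm * bhcD W m ω))) ^ θm ∂μ := by
            apply lintegral_congr
            intro ω
            rw [hexp_eq ω, ENNReal.ofReal_rpow_of_nonneg (Real.exp_pos _).le hθm0.le]
        _ ≤ (∫⁻ ω, ENNReal.ofReal (Real.exp (βm * bhcD W m ω)) ∂μ) ^ θm :=
            bhc_jensen μ (((bhcD_meas W hW.meas m).const_mul βm).exp.ennreal_ofReal).aemeasurable
              hθm0 hθm1
        _ ≤ (ENNReal.ofReal am) ^ θm := by
            exact ENNReal.rpow_le_rpow hlev hθm0.le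
        _ = ENNReal.ofReal (am ^ θm) := by
            rw [ENNReal.ofReal_rpow_of_nonneg (by linarith) hθm0.le]
    have key2 : (∫⁻ ω, g m ω ∂μ) + 1 = ∫⁻ ω, ENNReal.ofReal (Real.exp (c * Km m ω)) ∂μ := by
      have hcongr : ∫⁻ ω, ENNReal.ofReal (Real.exp (c * Km m ω)) ∂μ
          = ∫⁻ ω, (g m ω + 1) ∂μ := by
        apply lintegral_congr
        intro ω
        have he1 : (1:ℝ) ≤ Real.exp (c * Km m ω) :=
          Real.one_le_exp (mul_nonneg hc0.le (hKm0 m ω))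
        rw [hgdef]
        rw [show Real.exp (c * Km m ω) = (Real.exp (c * Km m ω) - 1) + 1 by ring]
        rw [ENNReal.ofReal_add (by linarith) (by norm_num), ENNReal.ofReal_one]
      rw [hcongr, lintegral_add_right _ measurable_const, lintegral_const, measure_univ, mul_one]
    have key3 : ∫⁻ ω, g m ω ∂μ ≤ ENNReal.ofReal (am ^ θm) - 1 := by
      rw [← key2] at key1
      exact ENNReal.le_sub_of_add_le_right (by norm_num) key1
    -- real bound on `am ^ θm - 1`
    have hw : θm * Real.log am = q^m * (((m:ℝ)+1)*Real.log 2 + c^2/2) := by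
      rw [hθmdef, hamdef]
      congr 1
      rw [Real.log_mul (by positivity) (by positivity), Real.log_pow,
        Real.log_mul (by norm_num) (Real.exp_pos _).ne', Real.log_exp]
      push_cast
      ring
    have hwM : θm * Real.log am ≤ M := by
      rw [hw, hMdef]
      have hum : (1:ℝ) + (m:ℝ)*η*Real.log 2 ≤ u^m := by
        have : u^m = Real.exp ((m:ℝ)*(η*Real.log 2)) := by
          rw [hudef, ← Real.rpow_natCast ((2:ℝ)^η) m, ← Real.rpow_mul (by norm_num),
            Real.rpow_def_of_pos (by norm_num)]
          congr 1
          ring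
        rw [this]
        have := Real.add_one_le_exp ((m:ℝ)*(η*Real.log 2))
        nlinarith
      have hden : (0:ℝ) < 1 + (m:ℝ)*η*Real.log 2 := by positivity
      have hqm : q^m ≤ (1 + (m:ℝ)*η*Real.log 2)⁻¹ := by
        rw [hqdef, inv_pow]
        apply inv_anti₀ hden hum
      have hclaim : ((m:ℝ)+1)*Real.log 2 ≤ (Real.log 2 + 1/η) * (1 + (m:ℝ)*η*Real.log 2) := by
        have h1 : (0:ℝ) ≤ (m:ℝ) := Nat.cast_nonneg m
        have h2 : (0:ℝ) < 1/η := by positivity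
        have h4 : η * (1/η) = 1 := by field_simp
        have hid : (Real.log 2 + 1/η) * (1 + (m:ℝ)*η*Real.log 2)
            = Real.log 2 + (m:ℝ)*η*(Real.log 2)^2 + 1/η + ((m:ℝ)*Real.log 2) * (η * (1/η)) := by
          ring
        rw [hid, h4]
        have h5 : 0 ≤ (m:ℝ)*η*(Real.log 2)^2 := by positivity
        linarith
      have hstep1 : ((m:ℝ)+1)*Real.log 2 * q^m ≤ Real.log 2 + 1/η := by
        calc ((m:ℝ)+1)*Real.log 2 * q^m ≤ ((m:ℝ)+1)*Real.log 2 * (1 + (m:ℝ)*η*Real.log 2)⁻¹ := by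
              apply mul_le_mul_of_nonneg_left hqm (by positivity)
          _ ≤ Real.log 2 + 1/η := by
              rw [← div_eq_mul_inv, div_le_iff₀ hden]
              exact hclaim
      have hstep2 : c^2/2 * q^m ≤ c^2/2 := by
        have hqm1 : q^m ≤ 1 := pow_le_one₀ hq0.le hq1.le
        nlinarith [sq_nonneg c]
      nlinarith [hstep1, hstep2]
    have hreal : am ^ θm - 1 ≤ Bm m := by
      have ham0 : (0:ℝ) < am := by linarith
      have hrw : am ^ θm = Real.exp (θm * Real.log am) := by
        rw [Real.rpow_def_of_pos ham0, mul_comm]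
      set w := θm * Real.log am with hwdef
      have hw0 : 0 ≤ w := by
        rw [hwdef]
        exact mul_nonneg hθm0.le (Real.log_nonneg ham1)
      have hexp1 : Real.exp w - 1 ≤ w * Real.exp w := by
        have h := Real.add_one_le_exp (-w)
        have h3 : Real.exp (-w) * Real.exp w = 1 := by rw [← Real.exp_add]; simp
        nlinarith [Real.exp_pos w]
      calc am ^ θm - 1 = Real.exp w - 1 := by rw [hrw]
        _ ≤ w * Real.exp w := hexp1
        _ ≤ w * Real.exp M := by
            apply mul_le_mul_of_nonneg_left (Real.exp_le_exp.2 hwM) hw0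
        _ = Bm m := by
            rw [hw]
            simp only [hBmdef]
            ring
    calc ∫⁻ ω, g m ω ∂μ ≤ ENNReal.ofReal (am ^ θm) - 1 := key3
      _ = ENNReal.ofReal (am ^ θm - 1) := by
          rw [ENNReal.ofReal_sub _ (by norm_num : (0:ℝ) ≤ 1), ENNReal.ofReal_one]
      _ ≤ ENNReal.ofReal (Bm m) := ENNReal.ofReal_le_ofReal hreal
  -- total lintegral bound
  have htotal : ∫⁻ ω, ENNReal.ofReal (Real.exp (sSup {r : ℝ | ∃ θ t : ℝ,
      0 < θ ∧ θ < 1 ∧ 0 ≤ t ∧ t ≤ 1 - θ ∧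
      r = |W (t + θ) ω - W t ω| / θ ^ ((1 : ℝ) / 2 - η)})) ∂μ ≤
      ENNReal.ofReal (1 + ∑' m, Bm m) := by
    calc ∫⁻ ω, ENNReal.ofReal (Real.exp (sSup _)) ∂μ
        ≤ ∫⁻ ω, (1 + ∑' m, g m ω) ∂μ := lintegral_mono_ae hptwise
      _ = 1 + ∑' m, ∫⁻ ω, g m ω ∂μ := by
          rw [lintegral_add_left measurable_const, lintegral_const, measure_univ, mul_one,
            lintegral_tsum (fun m => (hgmeas m).aemeasurable)]
      _ ≤ 1 + ∑' m, ENNReal.ofReal (Bm m) := by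
          refine add_le_add le_rfl ?_
          exact ENNReal.tsum_le_tsum hlevel
      _ = ENNReal.ofReal (1 + ∑' m, Bm m) := by
          rw [ENNReal.ofReal_add (by norm_num) htsum0, ENNReal.ofReal_one,
            ENNReal.ofReal_tsum_of_nonneg hBm0 hBsum]
  -- conclude for the Bochner integral
  by_cases hmeas' : AEStronglyMeasurable (fun ω => Real.exp (sSup {r : ℝ | ∃ θ t : ℝ,
      0 < θ ∧ θ < 1 ∧ 0 ≤ t ∧ t ≤ 1 - θ ∧
      r = |W (t + θ) ω - W t ω| / θ ^ ((1 : ℝ) / 2 - η)})) μ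
  · rw [integral_eq_lintegral_of_nonneg_ae
      (Eventually.of_forall fun ω => (Real.exp_pos _).le) hmeas']
    exact ENNReal.toReal_le_of_le_ofReal hC0 htotal
  · rw [integral_undef (fun hint => hmeas' hint.aestronglyMeasurable)]
    exact hC0
end

section
/- With the self-similar partition scheme: let δ satisfy (2+δ)^m = 1/δ, and recursively partition an interval of length (2+δ)^ℓ into pieces of lengths (2+δ)^{ℓ−1}, (2+δ)^{ℓ−m−1}, (2+δ)^{ℓ−1}, continuing to partition every piece of length greater than (2+δ)^{ℓ−d}. Then the total number of resulting pieces is at most (2+δ)^{d+m}. -/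
/-- The multiset of depths of the pieces produced by the self-similar partition
scheme: a piece of depth `j` (of length `(2+δ)^{ℓ-j}`) is split into pieces of
depths `j+1`, `j+m+1`, `j+1` as long as `j < d`, and is kept once `j ≥ d`. -/
def finalPieces (m d j : ℕ) : Multiset ℕ :=
  if h : j < d then
    finalPieces m d (j + 1) + finalPieces m d (j + m + 1) + finalPieces m d (j + 1)
  else {j}
termination_by d - j
decreasing_by all_goals omega

lemma finalPieces_mem_le (m d : ℕ) (j : ℕ) : j ≤ d + m → ∀ k ∈ finalPieces m d j, k ≤ d + m := by
  induction j using finalPieces.induct (m := m) (d := d) with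
  | case1 j h ih1 ih2 =>
    intro hj k hk
    have ih1 := ih1 (by omega)
    have ih2 := ih2 (by omega)
    rw [finalPieces, dif_pos h] at hk
    simp only [Multiset.mem_add] at hk
    rcases hk with (hk | hk) | hk
    · have := ih1 k hk; omega
    · have := ih2 k hk; omega
    · have := ih1 k hk; omega
  | case2 j h =>
    intro hj k hk
    rw [finalPieces, dif_neg h] at hk
    simp at hk; omega

lemma finalPieces_sum (m : ℕ) (δ : ℝ) (hδ : 0 < δ) (hδm : δ * (2 + δ) ^ m = 1) (d : ℕ) (j : ℕ) :
    ((finalPieces m d j).map (fun k => ((2 + δ)⁻¹ : ℝ) ^ k)).sum = (2 + δ)⁻¹ ^ j := by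
  have h2 : (0:ℝ) < 2 + δ := by linarith
  induction j using finalPieces.induct (m := m) (d := d) with
  | case1 j h ih1 ih2 =>
    rw [finalPieces, dif_pos h]
    simp only [Multiset.map_add, Multiset.sum_add, ih1, ih2]
    have hxm : ((2 + δ)⁻¹ : ℝ) ^ m = δ := by
      rw [inv_pow]
      field_simp
      linarith [hδm]
    have : ((2 + δ)⁻¹ : ℝ) * (2 + δ) = 1 := inv_mul_cancel₀ (ne_of_gt h2)
    have key : ((2 + δ)⁻¹ : ℝ) * 2 + (2 + δ)⁻¹ * (2 + δ)⁻¹ ^ m = 1 := by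
      rw [hxm]; linear_combination this
    calc ((2 + δ)⁻¹ : ℝ) ^ (j + 1) + (2 + δ)⁻¹ ^ (j + m + 1) + (2 + δ)⁻¹ ^ (j + 1)
        = (2 + δ)⁻¹ ^ j * ((2 + δ)⁻¹ * 2 + (2 + δ)⁻¹ * (2 + δ)⁻¹ ^ m) := by ring
      _ = (2 + δ)⁻¹ ^ j := by rw [key, mul_one]
  | case2 j h =>
    rw [finalPieces, dif_neg h]
    simp

/-- With `δ > 0` satisfying `(2+δ)^m = 1/δ`, the total number of pieces produced
by recursively partitioning an interval of length `(2+δ)^ℓ` (splitting every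
piece of length greater than `(2+δ)^{ℓ-d}`) is at most `(2+δ)^{d+m}`. -/
theorem card_finalPieces_le (m : ℕ) (hm : 1 ≤ m) (δ : ℝ) (hδ : 0 < δ)
    (hδm : δ * (2 + δ) ^ m = 1) (d : ℕ) :
    (Multiset.card (finalPieces m d 0) : ℝ) ≤ (2 + δ) ^ (d + m) := by
  have h2 : (0:ℝ) < 2 + δ := by linarith
  have hx : (0:ℝ) < (2 + δ)⁻¹ := inv_pos.mpr h2
  have hx1 : ((2 + δ)⁻¹ : ℝ) ≤ 1 := by
    rw [inv_le_one_iff₀]; right; linarith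
  have hsum := finalPieces_sum m δ hδ hδm d 0
  have hmem := finalPieces_mem_le m d 0 (by omega)
  set s := finalPieces m d 0 with hs
  have key : (Multiset.card s : ℝ) * (2 + δ)⁻¹ ^ (d + m) ≤ 1 := by
    rw [pow_zero] at hsum
    calc (Multiset.card s : ℝ) * (2 + δ)⁻¹ ^ (d + m)
        = (Multiset.card (s.map (fun k => ((2 + δ)⁻¹ : ℝ) ^ k))) • ((2 + δ)⁻¹ ^ (d + m) : ℝ) := by
          rw [Multiset.card_map]; simp [nsmul_eq_mul]
      _ ≤ (s.map (fun k => ((2 + δ)⁻¹ : ℝ) ^ k)).sum := by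
          apply Multiset.card_nsmul_le_sum
          intro x hx'
          obtain ⟨k, hk, rfl⟩ := Multiset.mem_map.mp hx'
          exact pow_le_pow_of_le_one (le_of_lt hx) hx1 (by simpa using hmem k hk)
      _ = 1 := hsum
  calc (Multiset.card s : ℝ)
      = (Multiset.card s : ℝ) * (2 + δ)⁻¹ ^ (d + m) * (2 + δ) ^ (d + m) := by
        rw [mul_assoc, inv_pow, inv_mul_cancel₀ (ne_of_gt (pow_pos h2 _)), mul_one]
    _ ≤ 1 * (2 + δ) ^ (d + m) := by
        exact mul_le_mul_of_nonneg_right key (le_of_lt (pow_pos h2 _))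
    _ = (2 + δ) ^ (d + m) := one_mul _
end
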